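/- arXiv:2401.06636 — 11 statements merged into one kernel-verified Lean document; each statement's English description precedes it below -/
import Mathlib

section
/- Let S be the semigroup B^1_{[0,∞)} with an adjoined compact ideal I (with embedding homomorphism f), and assume that I is not open in S. Then for every open set U ⊆ S with I ⊆ U, the set f⁻¹(U) is unbounded in B_{[0,∞)}: for every real number a > 0 there exists (x,y) ∈ B_{[0,∞)} with f(x,y) ∈ U, x ≥ a and y ≥ a. -/
/-- The underlying set of the semigroup `B_{[0,∞)}`: pairs of non-negative reals. -/
abbrev Bsg := {p : ℝ × ℝ // 0 ≤ p.1 ∧ 0 ≤ p.2}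

namespace Bsg

/-- The multiplication `(a,b)·(c,d) = (a+c−min b c, b+d−min b c)`. -/
def bmul (u v : Bsg) : Bsg :=
  ⟨(u.1.1 + v.1.1 - min u.1.2 v.1.1, u.1.2 + v.1.2 - min u.1.2 v.1.1),
    by
      refine ⟨?_, ?_⟩
      · show (0:ℝ) ≤ u.1.1 + v.1.1 - min u.1.2 v.1.1
        have h := min_le_right u.1.2 v.1.1
        have h1 := u.2.1; have h2 := v.2.1; linarith
      · show (0:ℝ) ≤ u.1.2 + v.1.2 - min u.1.2 v.1.1
        have h := min_le_left u.1.2 v.1.1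
        have h1 := u.2.2; have h2 := v.2.2; linarith⟩

instance : Semigroup Bsg where
  mul := bmul
  mul_assoc := by
    rintro ⟨⟨a,b⟩,ha,hb⟩ ⟨⟨c,d⟩,hc,hd⟩ ⟨⟨e,g⟩,he,hg⟩
    show bmul (bmul _ _) _ = bmul _ (bmul _ _)
    apply Subtype.ext
    rw [Prod.ext_iff]
    constructor <;>
      simp only [bmul, min_def] <;> split_ifs <;> simp_all <;> linarith

/-- The natural partial order on the inverse semigroup `B_{[0,∞)}`:
`s ≼ t` iff `s = t·e` for some idempotent `e`. -/
def ple (s t : Bsg) : Prop := ∃ e : Bsg, e * e = e ∧ s = t * e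

/-- `L_α^+ = {(x, x+α) : x ≥ 0}`. -/
def Lplus (α : ℝ) : Set Bsg := {p | p.1.2 = p.1.1 + α}

/-- `L_α^− = {(x+α, x) : x ≥ 0}`. -/
def Lminus (α : ℝ) : Set Bsg := {p | p.1.1 = p.1.2 + α}

/-- `↓(a,b)`, the down-set of an element w.r.t. the natural partial order. -/
def lowerSet (t : Bsg) : Set Bsg := {s | ple s t}

/-- `↓°(a,b) = ↓(a,b) \ {(a,b)}`. -/
def lowerSetStrict (t : Bsg) : Set Bsg := lowerSet t \ {t}

/-- The inversion `(a,b) ↦ (b,a)`. -/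
def binv (u : Bsg) : Bsg := ⟨(u.1.2, u.1.1), u.2.2, u.2.1⟩

end Bsg

/- `B^1_{[0,∞)}`: the topology on `Bsg` is the subspace topology inherited from `ℝ × ℝ`,
which is the default instance on the subtype. -/

/-- if `I` is not open then for every open `U ⊇ I` the set `f⁻¹(U)` is
unbounded in `B_{[0,∞)}`. -/
theorem stmt1 {S : Type*} [TopologicalSpace S] [T2Space S] [LocallyCompactSpace S] [Semigroup S]
    (hsep : ∀ a : S, Continuous (fun x : S => a * x) ∧ Continuous (fun x : S => x * a))
    (I : Set S) (hne : I.Nonempty) (hIcomp : IsCompact I)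
    (hIdeal : ∀ s : S, ∀ a ∈ I, s * a ∈ I ∧ a * s ∈ I)
    (f : Bsg → S) (hinj : Function.Injective f)
    (hhom : ∀ u v : Bsg, f (u * v) = f u * f v)
    (hrange : Set.range f = Iᶜ)
    (hemb : Topology.IsEmbedding f)
    (hInotopen : ¬ IsOpen I)
    (U : Set S) (hU : IsOpen U) (hIU : I ⊆ U) :
    ∀ a : ℝ, 0 < a → ∃ p : Bsg, f p ∈ U ∧ a ≤ p.1.1 ∧ a ≤ p.1.2 := by
  intro a ha
  -- I meets the closure of range f
  have hq : ∃ q ∈ I, q ∈ closure (Set.range f) := by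
    by_contra h
    push_neg at h
    have hcl : closure (Set.range f) ⊆ Set.range f := by
      intro x hx
      by_contra hxr
      have hxI : x ∈ I := by
        have : x ∈ Iᶜ → x ∈ Set.range f := by rw [hrange]; exact fun h => h
        by_contra hxI
        exact hxr (this hxI)
      exact h x hxI hx
    have hclosed : IsClosed (Set.range f) := isClosed_of_closure_subset hcl
    have : IsOpen I := by
      have : I = (Set.range f)ᶜ := by rw [hrange, compl_compl]
      rw [this]
      exact hclosed.isOpen_compl
    exact hInotopen this
  obtain ⟨q, hqI, hqcl⟩ := hq
  set r1 : Bsg := ⟨(a, 0), le_of_lt ha, le_refl 0⟩ with hr1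
  set r2 : Bsg := ⟨(0, a), le_refl 0, le_of_lt ha⟩ with hr2
  -- the continuous translation
  have hg : Continuous (fun x : S => f r1 * (x * f r2)) :=
    (hsep (f r1)).1.comp (hsep (f r2)).2
  have hgq : f r1 * (q * f r2) ∈ U := by
    have h1 : q * f r2 ∈ I := (hIdeal (f r2) q hqI).2
    exact hIU (hIdeal (f r1) _ h1).1
  have hopen : IsOpen ((fun x : S => f r1 * (x * f r2)) ⁻¹' U) := hU.preimage hg
  have hqmem : q ∈ (fun x : S => f r1 * (x * f r2)) ⁻¹' U := hgq
  rcases mem_closure_iff.mp hqcl _ hopen hqmem with ⟨s, hsU, p, rfl⟩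
  refine ⟨r1 * (p * r2), ?_, ?_, ?_⟩
  · rw [hhom, hhom]; exact hsU
  · have h1 : ((p * r2 : Bsg) : ℝ × ℝ) = (p.1.1, p.1.2 + a) := by
      show ((Bsg.bmul p r2 : Bsg) : ℝ × ℝ) = _
      simp [Bsg.bmul, hr2, min_eq_right p.2.2]
    show a ≤ ((r1 * (p * r2) : Bsg) : ℝ × ℝ).1
    show a ≤ ((Bsg.bmul r1 (p * r2) : Bsg) : ℝ × ℝ).1
    simp only [Bsg.bmul, h1, hr1]
    have := p.2.1
    have hmin : min (0:ℝ) p.1.1 = 0 := min_eq_left p.2.1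
    simp only [hmin]
    linarith
  · have h1 : ((p * r2 : Bsg) : ℝ × ℝ) = (p.1.1, p.1.2 + a) := by
      show ((Bsg.bmul p r2 : Bsg) : ℝ × ℝ) = _
      simp [Bsg.bmul, hr2, min_eq_right p.2.2]
    show a ≤ ((Bsg.bmul r1 (p * r2) : Bsg) : ℝ × ℝ).2
    simp only [Bsg.bmul, h1, hr1]
    have hmin : min (0:ℝ) p.1.1 = 0 := min_eq_left p.2.1
    simp only [hmin]
    have := p.2.2
    linarith
end

section
/- Let S be the semigroup B^1_{[0,∞)} with an adjoined compact ideal I (with embedding homomorphism f), and assume that I is not open in S. Then for every open set U ⊆ S with I ⊆ U there exists a real number a ≥ 0 such that S \ U ⊆ f([0,a] × [0,a]). -/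
/- `B^1_{[0,∞)}`: the topology on `Bsg` is the subspace topology inherited from `ℝ × ℝ`,
which is the default instance on the subtype. -/

/-- if `I` is not open then for every open `U ⊇ I` there is `a ≥ 0` with
`S \ U ⊆ f([0,a] × [0,a])`. -/
theorem stmt2 {S : Type*} [TopologicalSpace S] [T2Space S] [LocallyCompactSpace S] [Semigroup S]
    (hsep : ∀ a : S, Continuous (fun x : S => a * x) ∧ Continuous (fun x : S => x * a))
    (I : Set S) (hne : I.Nonempty) (hIcomp : IsCompact I)
    (hIdeal : ∀ s : S, ∀ a ∈ I, s * a ∈ I ∧ a * s ∈ I)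
    (f : Bsg → S) (hinj : Function.Injective f)
    (hhom : ∀ u v : Bsg, f (u * v) = f u * f v)
    (hrange : Set.range f = Iᶜ)
    (hemb : Topology.IsEmbedding f)
    (hInotopen : ¬ IsOpen I)
    (U : Set S) (hU : IsOpen U) (hIU : I ⊆ U) :
    ∃ a : ℝ, 0 ≤ a ∧
      Set.univ \ U ⊆ f '' {p : Bsg | p.1.1 ∈ Set.Icc 0 a ∧ p.1.2 ∈ Set.Icc 0 a} := by

  classical
  -- Since `I` is not open, there is `y ∈ I` in the closure of `range f`.
  have hyex : ∃ y, y ∈ closure (Set.range f) ∧ y ∈ I := by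
    by_contra h
    push_neg at h
    have hsub : closure (Set.range f) ⊆ Iᶜ := fun y hy => h y hy
    have hcl : closure (Set.range f) = Set.range f := by
      apply subset_antisymm
      · rw [hrange] at hsub ⊢; exact hsub
      · exact subset_closure
    have hclosed : IsClosed (Set.range f) := by
      rw [← hcl]; exact isClosed_closure
    have : IsOpen I := by
      have := hclosed.isOpen_compl
      rwa [hrange, compl_compl] at this
    exact hInotopen this
  obtain ⟨y, hycl, hyI⟩ := hyex
  -- compact neighborhood `K` of `I` inside `U`
  obtain ⟨K, hKcomp, hIK, hKU⟩ := exists_compact_between hIcomp hU hIU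
  set V : Set S := interior K with hVdef
  have hVopen : IsOpen V := isOpen_interior
  have hVK : V ⊆ K := interior_subset
  have hKclosed : IsClosed K := hKcomp.isClosed
  have hclVK : closure V ⊆ K := closure_minimal hVK hKclosed
  -- the compact "boundary" and its preimage
  set D : Set S := K \ V with hDdef
  have hDcomp : IsCompact D := hKcomp.diff hVopen
  have hDsub : D ⊆ Set.range f := by
    intro s hs
    rw [hrange]
    intro hsI
    exact hs.2 (hIK hsI)
  set B : Set Bsg := f ⁻¹' D with hBdef
  have hBcomp : IsCompact B := by
    rw [hemb.isCompact_iff]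
    rw [Set.image_preimage_eq_of_subset hDsub]
    exact hDcomp
  -- a bound for `B`
  have hgcont : Continuous fun p : Bsg => max p.1.1 p.1.2 :=
    (continuous_fst.comp continuous_subtype_val).max
      (continuous_snd.comp continuous_subtype_val)
  obtain ⟨R, hR⟩ : BddAbove ((fun p : Bsg => max p.1.1 p.1.2) '' B) :=
    (hBcomp.image hgcont).bddAbove
  set a : ℝ := max R 0 + 1 with hadef
  have ha0 : (0:ℝ) ≤ a := by
    have := le_max_right R 0
    simp only [hadef]; linarith
  have hRa : R < a := by
    have := le_max_left R 0
    simp only [hadef]; linarith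
  -- the open set `W` and the frontier estimate
  set W : Set Bsg := f ⁻¹' V with hWdef
  have hWopen : IsOpen W := hVopen.preimage hemb.continuous
  have hclW : closure W ⊆ W ∪ B := by
    intro p hp
    have h1 : f p ∈ closure (f '' W) :=
      image_closure_subset_closure_image hemb.continuous ⟨p, hp, rfl⟩
    have h2 : f p ∈ K := hclVK (closure_mono (Set.image_preimage_subset f V) h1)
    by_cases h3 : f p ∈ V
    · exact Or.inl h3
    · exact Or.inr ⟨h2, h3⟩
  -- the connected region far from the origin
  set C : Set Bsg := {p : Bsg | a ≤ max p.1.1 p.1.2} with hCdef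
  have hCpre : IsPreconnected C := by
    apply Topology.IsInducing.subtypeVal.isPreconnected_image.mp
    have himg : Subtype.val '' C =
        ({q : ℝ × ℝ | a ≤ q.1 ∧ 0 ≤ q.2} ∪ {q : ℝ × ℝ | 0 ≤ q.1 ∧ a ≤ q.2}) := by
      ext q
      constructor
      · rintro ⟨⟨q, hq⟩, hmem, rfl⟩
        simp only [hCdef, Set.mem_setOf_eq] at hmem
        rcases le_max_iff.mp hmem with h | h
        · exact Or.inl ⟨h, hq.2⟩
        · exact Or.inr ⟨hq.1, h⟩
      · rintro (⟨h1, h2⟩ | ⟨h1, h2⟩)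
        · refine ⟨⟨q, ⟨le_trans ha0 h1, h2⟩⟩, ?_, rfl⟩
          simp only [hCdef, Set.mem_setOf_eq]
          exact le_max_iff.mpr (Or.inl h1)
        · refine ⟨⟨q, ⟨h1, le_trans ha0 h2⟩⟩, ?_, rfl⟩
          simp only [hCdef, Set.mem_setOf_eq]
          exact le_max_iff.mpr (Or.inr h2)
    have hA1 : Convex ℝ {q : ℝ × ℝ | a ≤ q.1 ∧ 0 ≤ q.2} := by
      have : {q : ℝ × ℝ | a ≤ q.1 ∧ 0 ≤ q.2} = Set.Ici a ×ˢ Set.Ici 0 := by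
        ext q; simp [Set.mem_prod, Prod.le_def]
      rw [this]
      exact (convex_Ici a).prod (convex_Ici 0)
    have hA2 : Convex ℝ {q : ℝ × ℝ | 0 ≤ q.1 ∧ a ≤ q.2} := by
      have : {q : ℝ × ℝ | 0 ≤ q.1 ∧ a ≤ q.2} = Set.Ici 0 ×ˢ Set.Ici a := by
        ext q; simp [Set.mem_prod, Prod.le_def]
      rw [this]
      exact (convex_Ici 0).prod (convex_Ici a)
    have hpre : IsPreconnected
        ({q : ℝ × ℝ | a ≤ q.1 ∧ 0 ≤ q.2} ∪ {q : ℝ × ℝ | 0 ≤ q.1 ∧ a ≤ q.2}) :=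
      IsPreconnected.union ((a, a) : ℝ × ℝ) ⟨le_refl a, ha0⟩ ⟨ha0, le_refl a⟩
        hA1.isPreconnected hA2.isPreconnected
    rw [← himg] at hpre
    exact hpre
  -- `C ∩ W` is nonempty
  have hBsqcomp : IsCompact {p : Bsg | p.1.1 ≤ a ∧ p.1.2 ≤ a} := by
    rw [Topology.IsEmbedding.subtypeVal.isCompact_iff]
    have himg : Subtype.val '' {p : Bsg | p.1.1 ≤ a ∧ p.1.2 ≤ a} =
        Set.Icc ((0:ℝ), (0:ℝ)) ((a:ℝ), (a:ℝ)) := by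
      ext q
      constructor
      · rintro ⟨⟨q, hq⟩, hmem, rfl⟩
        exact ⟨⟨hq.1, hq.2⟩, ⟨hmem.1, hmem.2⟩⟩
      · rintro ⟨⟨h1, h2⟩, ⟨h3, h4⟩⟩
        exact ⟨⟨q, ⟨h1, h2⟩⟩, ⟨h3, h4⟩, rfl⟩
    rw [himg]
    exact isCompact_Icc
  have hfBsqclosed : IsClosed (f '' {p : Bsg | p.1.1 ≤ a ∧ p.1.2 ≤ a}) :=
    (hBsqcomp.image hemb.continuous).isClosed
  have hyV : y ∈ V := hIK hyI
  have hyNB : y ∉ f '' {p : Bsg | p.1.1 ≤ a ∧ p.1.2 ≤ a} := by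
    rintro ⟨p, _, rfl⟩
    have : f p ∈ Set.range f := ⟨p, rfl⟩
    rw [hrange] at this
    exact this hyI
  obtain ⟨s0, hs0N, hs0r⟩ :=
    mem_closure_iff.mp hycl (V \ f '' {p : Bsg | p.1.1 ≤ a ∧ p.1.2 ≤ a})
      (hVopen.sdiff hfBsqclosed) ⟨hyV, hyNB⟩
  obtain ⟨p0, rfl⟩ := hs0r
  have hp0W : p0 ∈ W := hs0N.1
  have hp0C : p0 ∈ C := by
    have h0 : p0 ∉ {p : Bsg | p.1.1 ≤ a ∧ p.1.2 ≤ a} := fun h => hs0N.2 ⟨p0, h, rfl⟩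
    simp only [Set.mem_setOf_eq, not_and_or, not_le] at h0
    simp only [hCdef, Set.mem_setOf_eq]
    rcases h0 with h | h
    · exact le_max_iff.mpr (Or.inl h.le)
    · exact le_max_iff.mpr (Or.inr h.le)
  -- connectedness argument: `C ⊆ W`
  have hBmax : ∀ q ∈ B, max q.1.1 q.1.2 ≤ R := fun q hq =>
    hR (Set.mem_image_of_mem _ hq)
  have hCnotB : ∀ q ∈ C, q ∉ B := by
    intro q hqC hqB
    have h1 := hBmax q hqB
    have h2 : a ≤ max q.1.1 q.1.2 := by simpa only [hCdef, Set.mem_setOf_eq] using hqC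
    linarith
  have hCW : C ⊆ W := by
    intro p hpC
    by_contra hpW
    have hcover : C ⊆ W ∪ (closure W)ᶜ := by
      intro q hq
      by_cases h : q ∈ closure W
      · rcases hclW h with h' | h'
        · exact Or.inl h'
        · exact absurd h' (hCnotB q hq)
      · exact Or.inr h
    have hpnc : p ∉ closure W := by
      intro h
      rcases hclW h with h' | h'
      · exact hpW h'
      · exact hCnotB p hpC h'
    obtain ⟨z, _, hzW, hznW⟩ :=
      hCpre W (closure W)ᶜ hWopen isClosed_closure.isOpen_compl hcover
        ⟨p0, hp0C, hp0W⟩ ⟨p, hpC, hpnc⟩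
    exact hznW (subset_closure hzW)
  -- conclusion
  refine ⟨a, ha0, ?_⟩
  rintro s ⟨-, hsU⟩
  have hsr : s ∈ Set.range f := by
    rw [hrange]
    exact fun hsI => hsU (hIU hsI)
  obtain ⟨p, rfl⟩ := hsr
  have hpW : p ∉ W := fun h => hsU (hKU (hVK h))
  have hpC : p ∉ C := fun h => hpW (hCW h)
  have hm : max p.1.1 p.1.2 < a := by
    by_contra h
    exact hpC (by simpa only [hCdef, Set.mem_setOf_eq] using not_lt.mp h)
  exact ⟨p, ⟨⟨p.2.1, le_of_lt (lt_of_le_of_lt (le_max_left _ _) hm)⟩,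
    ⟨p.2.2, le_of_lt (lt_of_le_of_lt (le_max_right _ _) hm)⟩⟩, rfl⟩
end

section
/- Let S be the semigroup B^1_{[0,∞)} with an adjoined compact ideal I. Then either I is an open subset of S, or S is compact. -/
/- `B^1_{[0,∞)}`: the topology on `Bsg` is the subspace topology inherited from `ℝ × ℝ`,
which is the default instance on the subtype. -/

/-- either `I` is open in `S` or `S` is compact. -/
theorem stmt3 {S : Type*} [TopologicalSpace S] [T2Space S] [LocallyCompactSpace S] [Semigroup S]
    (hsep : ∀ a : S, Continuous (fun x : S => a * x) ∧ Continuous (fun x : S => x * a))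
    (I : Set S) (hne : I.Nonempty) (hIcomp : IsCompact I)
    (hIdeal : ∀ s : S, ∀ a ∈ I, s * a ∈ I ∧ a * s ∈ I)
    (f : Bsg → S) (hinj : Function.Injective f)
    (hhom : ∀ u v : Bsg, f (u * v) = f u * f v)
    (hrange : Set.range f = Iᶜ)
    (hemb : Topology.IsEmbedding f) :
    IsOpen I ∨ CompactSpace S := by
  by_cases hI : IsOpen I
  · exact Or.inl hI
  right
  -- There is a point of I in the closure of the complement of I
  obtain ⟨a, haI, hacl⟩ : ∃ a, a ∈ I ∧ a ∈ closure Iᶜ := by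
    by_contra h
    push_neg at h
    have hsub : I ⊆ interior I := by
      intro a haI
      have := h a haI
      rw [closure_compl] at this
      simpa using this
    have : interior I = I := subset_antisymm interior_subset hsub
    rw [← this] at hI
    exact hI isOpen_interior
  -- A relatively compact open neighborhood U of I
  obtain ⟨L, hL, hIL, -⟩ := exists_compact_between hIcomp isOpen_univ (Set.subset_univ I)
  set U : Set S := interior L with hUdef
  have hUopen : IsOpen U := isOpen_interior
  have hIU : I ⊆ U := hIL
  have hclU : IsCompact (closure U) :=
    hL.of_isClosed_subset isClosed_closure (closure_minimal interior_subset hL.isClosed)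
  -- The boundary of U is compact and contained in the range of f
  set Fr : Set S := closure U \ U with hFrdef
  have hFrK : IsCompact Fr := hclU.diff hUopen
  have hFrf : Fr ⊆ Set.range f := by
    intro s hs
    rw [hrange]
    exact fun hsI => hs.2 (hIU hsI)
  have hpre : IsCompact (f ⁻¹' Fr) := by
    rw [hemb.isCompact_iff, Set.image_preimage_eq_of_subset hFrf]
    exact hFrK
  -- hence f ⁻¹' Fr is bounded: all its points lie in a box [0,M]²
  have hpre' : IsCompact (Subtype.val '' (f ⁻¹' Fr)) := hpre.image continuous_subtype_val
  obtain ⟨C, hC⟩ : ∃ C, ∀ p ∈ Subtype.val '' (f ⁻¹' Fr), ‖p‖ ≤ C :=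
    isBounded_iff_forall_norm_le.mp hpre'.isBounded
  set M : ℝ := max C 0 with hMdef
  have hM0 : (0:ℝ) ≤ M := le_max_right _ _
  have hbound : ∀ z : Bsg, f z ∈ Fr → z.1.1 ≤ M ∧ z.1.2 ≤ M := by
    intro z hz
    have hzn : ‖z.1‖ ≤ C := hC z.1 ⟨z, hz, rfl⟩
    constructor
    · calc z.1.1 ≤ |z.1.1| := le_abs_self _
        _ = ‖z.1.1‖ := (Real.norm_eq_abs _).symm
        _ ≤ ‖z.1‖ := norm_fst_le _
        _ ≤ C := hzn
        _ ≤ M := le_max_left _ _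
    · calc z.1.2 ≤ |z.1.2| := le_abs_self _
        _ = ‖z.1.2‖ := (Real.norm_eq_abs _).symm
        _ ≤ ‖z.1‖ := norm_snd_le _
        _ ≤ C := hzn
        _ ≤ M := le_max_left _ _
  -- the "far" part and the "box" part of the quadrant
  set Far : Set Bsg := {z | M < z.1.1 ∨ M < z.1.2} with hFardef
  set Box : Set Bsg := {z | z.1.1 ≤ M ∧ z.1.2 ≤ M} with hBoxdef
  -- the box is compact
  have hBoxK : IsCompact Box := by
    rw [Subtype.isCompact_iff]
    have himg : Subtype.val '' Box = Set.Icc ((0:ℝ), (0:ℝ)) (M, M) := by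
      ext p
      constructor
      · rintro ⟨z, ⟨h1, h2⟩, rfl⟩
        exact ⟨⟨z.2.1, z.2.2⟩, ⟨h1, h2⟩⟩
      · rintro ⟨⟨h01, h02⟩, ⟨hM1, hM2⟩⟩
        exact ⟨⟨p, h01, h02⟩, ⟨hM1, hM2⟩, rfl⟩
    rw [himg]
    exact isCompact_Icc
  -- the far part is preconnected
  have hFarpre : IsPreconnected Far := by
    rw [← (⟨rfl⟩ : Topology.IsInducing (Subtype.val : Bsg → ℝ × ℝ)).isPreconnected_image]
    have himg : Subtype.val '' Far =
        ((Set.Ici (0:ℝ) ∩ Set.Ioi M) ×ˢ Set.Ici (0:ℝ)) ∪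
          (Set.Ici (0:ℝ) ×ˢ (Set.Ici (0:ℝ) ∩ Set.Ioi M)) := by
      ext p
      constructor
      · rintro ⟨z, hz, rfl⟩
        rcases hz with h | h
        · exact Or.inl ⟨⟨z.2.1, h⟩, z.2.2⟩
        · exact Or.inr ⟨z.2.1, ⟨z.2.2, h⟩⟩
      · rintro (⟨⟨h01, hM1⟩, h02⟩ | ⟨h01, ⟨h02, hM2⟩⟩)
        · exact ⟨⟨p, h01, h02⟩, Or.inl hM1, rfl⟩
        · exact ⟨⟨p, h01, h02⟩, Or.inr hM2, rfl⟩
    have hx : ((M+1, M+1) : ℝ × ℝ) ∈ (Set.Ici (0:ℝ) ∩ Set.Ioi M) ×ˢ Set.Ici (0:ℝ) := by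
      refine Set.mem_prod.mpr ⟨⟨?_, ?_⟩, ?_⟩ <;> simp <;> linarith
    have hy : ((M+1, M+1) : ℝ × ℝ) ∈ Set.Ici (0:ℝ) ×ˢ (Set.Ici (0:ℝ) ∩ Set.Ioi M) := by
      refine Set.mem_prod.mpr ⟨?_, ⟨?_, ?_⟩⟩ <;> simp <;> linarith
    have hpc : IsPreconnected (((Set.Ici (0:ℝ) ∩ Set.Ioi M) ×ˢ Set.Ici (0:ℝ)) ∪
        (Set.Ici (0:ℝ) ×ˢ (Set.Ici (0:ℝ) ∩ Set.Ioi M))) :=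
      IsPreconnected.union (M+1, M+1) hx hy
        (((convex_Ici 0).inter (convex_Ioi M)).prod (convex_Ici 0)).isPreconnected
        ((convex_Ici 0).prod ((convex_Ici 0).inter (convex_Ioi M))).isPreconnected
    rw [← himg] at hpc
    exact hpc
  -- the image of the far part avoids the boundary of U
  have hsubUV : f '' Far ⊆ U ∪ (closure U)ᶜ := by
    rintro _ ⟨z, hz, rfl⟩
    by_cases h : f z ∈ closure U
    · left
      by_contra hfzU
      have : f z ∈ Fr := ⟨h, hfzU⟩
      rcases hz with h1 | h1
      · exact absurd (hbound z this).1 (not_le.mpr h1)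
      · exact absurd (hbound z this).2 (not_le.mpr h1)
    · exact Or.inr h
  have hdisj : Disjoint U ((closure U)ᶜ) :=
    (disjoint_compl_right : Disjoint (closure U) (closure U)ᶜ).mono_left subset_closure
  -- the image of the far part meets U (a is in the closure of f '' Far)
  have hmeet : ((f '' Far) ∩ U).Nonempty := by
    have hrsub : Set.range f ⊆ f '' Box ∪ f '' Far := by
      rintro _ ⟨z, rfl⟩
      rcases le_or_gt z.1.1 M with h1 | h1
      · rcases le_or_gt z.1.2 M with h2 | h2
        · exact Or.inl ⟨z, ⟨h1, h2⟩, rfl⟩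
        · exact Or.inr ⟨z, Or.inr h2, rfl⟩
      · exact Or.inr ⟨z, Or.inl h1, rfl⟩
    have haFar : a ∈ closure (f '' Far) := by
      have h1 : a ∈ closure (Set.range f) := by rw [hrange]; exact hacl
      have h2 : a ∈ closure (f '' Box ∪ f '' Far) := closure_mono hrsub h1
      rw [closure_union] at h2
      rcases h2 with h2 | h2
      · exfalso
        have hcl : closure (f '' Box) = f '' Box :=
          (hBoxK.image hemb.continuous).isClosed.closure_eq
        rw [hcl] at h2
        obtain ⟨z, -, hza⟩ := h2
        have : a ∈ Set.range f := ⟨z, hza⟩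
        rw [hrange] at this
        exact this haI
      · exact h2
    have := (_root_.mem_closure_iff.mp haFar) U hUopen (hIU haI)
    obtain ⟨x, hxU, hxF⟩ := this
    exact ⟨x, hxF, hxU⟩
  -- hence the image of the far part is contained in U
  have hsubU : f '' Far ⊆ U :=
    IsPreconnected.subset_left_of_subset_union hUopen isClosed_closure.isOpen_compl
      hdisj hsubUV hmeet (hFarpre.image f hemb.continuous.continuousOn)
  -- S is the union of two compact sets
  have huniv : (Set.univ : Set S) ⊆ f '' Box ∪ closure U := by
    intro s _
    by_cases hsI : s ∈ I
    · exact Or.inr (subset_closure (hIU hsI))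
    · have : s ∈ Set.range f := by rw [hrange]; exact hsI
      obtain ⟨z, rfl⟩ := this
      rcases le_or_gt z.1.1 M with h1 | h1
      · rcases le_or_gt z.1.2 M with h2 | h2
        · exact Or.inl ⟨z, ⟨h1, h2⟩, rfl⟩
        · exact Or.inr (subset_closure (hsubU ⟨z, Or.inr h2, rfl⟩))
      · exact Or.inr (subset_closure (hsubU ⟨z, Or.inl h1, rfl⟩))
  have hcompuniv : IsCompact (Set.univ : Set S) :=
    ((hBoxK.image hemb.continuous).union hclU).of_isClosed_subset isClosed_univ huniv
  exact ⟨hcompuniv⟩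
end

section
/- The one-point compactification OnePoint(B^1_{[0,∞)}), with the multiplication extending that of B_{[0,∞)} and with ∞ as a zero element, is a compact Hausdorff space in which the multiplication is separately continuous (for every element u the maps v ↦ u·v and v ↦ v·u are continuous) and the inversion map sending (a,b) ↦ (b,a) and ∞ ↦ ∞ is continuous. -/
/- `B^1_{[0,∞)}`: the topology on `Bsg` is the subspace topology inherited from `ℝ × ℝ`,
which is the default instance on the subtype. -/

open Bsg in
/-- The multiplication of `B_{[0,∞)}` extended to the one-point compactification,
with `∞` as a zero element. -/
def omul (u v : OnePoint Bsg) : OnePoint Bsg :=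
  Option.elim u OnePoint.infty
    (fun a => Option.elim v OnePoint.infty (fun b => (Option.some (a * b) : OnePoint Bsg)))

open Bsg in
/-- The inversion `(a,b) ↦ (b,a)`, `∞ ↦ ∞` on the one-point compactification. -/
def oinv (u : OnePoint Bsg) : OnePoint Bsg :=
  Option.elim u OnePoint.infty (fun a => (Option.some (binv a) : OnePoint Bsg))


namespace Bsg

lemma isClosed_range_val : IsClosed (Set.range (Subtype.val : Bsg → ℝ × ℝ)) := by
  rw [Subtype.range_coe_subtype]
  exact (isClosed_le continuous_const continuous_fst).inter
    (isClosed_le continuous_const continuous_snd)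

lemma closedEmbedding_val : Topology.IsClosedEmbedding (Subtype.val : Bsg → ℝ × ℝ) :=
  ⟨Topology.IsEmbedding.subtypeVal, isClosed_range_val⟩

instance : LocallyCompactSpace Bsg :=
  closedEmbedding_val.locallyCompactSpace

lemma tendsto_cocompact {f : Bsg → Bsg} (c : ℝ)
    (h : ∀ v : Bsg, v.1.1 + v.1.2 - c ≤ (f v).1.1 + (f v).1.2) :
    Filter.Tendsto f (Filter.cocompact Bsg) (Filter.cocompact Bsg) := by
  rw [Filter.hasBasis_cocompact.tendsto_iff Filter.hasBasis_cocompact]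
  intro K hK
  obtain ⟨M, hM⟩ : ∃ M : ℝ, ∀ p ∈ K, p.1.1 + p.1.2 ≤ M := by
    rcases K.eq_empty_or_nonempty with rfl | hne
    · exact ⟨0, by simp⟩
    · obtain ⟨p, hpK, hp⟩ := hK.exists_isMaxOn hne
        (((continuous_fst.add continuous_snd).comp continuous_subtype_val).continuousOn)
      exact ⟨p.1.1 + p.1.2, fun q hq => hp hq⟩
  refine ⟨Subtype.val ⁻¹' (Set.Icc 0 (M + c) ×ˢ Set.Icc 0 (M + c)), ?_, ?_⟩
  · exact closedEmbedding_val.isCompact_preimage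
      ((isCompact_Icc).prod (isCompact_Icc))
  · intro v hv hfv
    apply hv
    have h1 := v.2.1
    have h2 := v.2.2
    have h3 := h v
    have h4 := hM _ hfv
    exact ⟨⟨h1, by linarith⟩, ⟨h2, by linarith⟩⟩

lemma continuous_mul_left (u : Bsg) : Continuous (fun v : Bsg => u * v) := by
  apply Continuous.subtype_mk
  show Continuous fun v : Bsg =>
    (u.1.1 + v.1.1 - min u.1.2 v.1.1, u.1.2 + v.1.2 - min u.1.2 v.1.1)
  fun_prop

lemma continuous_mul_right (u : Bsg) : Continuous (fun v : Bsg => v * u) := by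
  apply Continuous.subtype_mk
  show Continuous fun v : Bsg =>
    (v.1.1 + u.1.1 - min v.1.2 u.1.1, v.1.2 + u.1.2 - min v.1.2 u.1.1)
  fun_prop

lemma continuous_binv : Continuous binv := by
  apply Continuous.subtype_mk
  show Continuous fun v : Bsg => (v.1.2, v.1.1)
  fun_prop

end Bsg

open Bsg in
lemma key_cont {f : Bsg → Bsg} (hc : Continuous f) (c : ℝ)
    (h : ∀ v : Bsg, v.1.1 + v.1.2 - c ≤ (f v).1.1 + (f v).1.2) :
    Continuous (fun v : OnePoint Bsg =>
      Option.elim v OnePoint.infty (fun b => (Option.some (f b) : OnePoint Bsg))) := by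
  have : (fun v : OnePoint Bsg =>
      Option.elim v OnePoint.infty (fun b => (Option.some (f b) : OnePoint Bsg)))
      = OnePoint.map f := by
    funext v; cases v <;> rfl
  rw [this]
  apply OnePoint.continuous_map hc
  rw [Filter.coclosedCompact_eq_cocompact]
  exact tendsto_cocompact c h

/-- the one-point compactification of `B^1_{[0,∞)}`, with the extended
multiplication (with `∞` as zero), is compact Hausdorff, has separately continuous
multiplication, and continuous inversion. -/
theorem stmt4 :
    (∀ u v : Bsg, omul (Option.some u : OnePoint Bsg) (Option.some v : OnePoint Bsg)
        = (Option.some (u * v) : OnePoint Bsg)) ∧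
    (∀ u : OnePoint Bsg,
        omul u OnePoint.infty = OnePoint.infty ∧ omul OnePoint.infty u = OnePoint.infty) ∧
    CompactSpace (OnePoint Bsg) ∧ T2Space (OnePoint Bsg) ∧
    (∀ u : OnePoint Bsg,
        Continuous (fun v => omul u v) ∧ Continuous (fun v => omul v u)) ∧
    Continuous oinv := by
  refine ⟨fun u v => rfl, fun u => ⟨by cases u <;> rfl, rfl⟩, inferInstance, inferInstance,
    ?_, ?_⟩
  · intro u
    cases u with
    | infty => exact ⟨continuous_const, by
        have : (fun v : OnePoint Bsg => omul v OnePoint.infty) = fun _ => OnePoint.infty := by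
          funext v; cases v <;> rfl
        rw [this]; exact continuous_const⟩
    | coe a =>
      constructor
      · exact key_cont (Bsg.continuous_mul_left a) (a.1.2) (by
          intro v
          have h1 := min_le_left a.1.2 v.1.1
          have h2 := a.2.1
          show v.1.1 + v.1.2 - a.1.2 ≤
            a.1.1 + v.1.1 - min a.1.2 v.1.1 + (a.1.2 + v.1.2 - min a.1.2 v.1.1)
          linarith)
      · exact key_cont (Bsg.continuous_mul_right a) (a.1.1) (by
          intro v
          have h1 := min_le_right v.1.2 a.1.1
          have h2 := a.2.2
          show v.1.1 + v.1.2 - a.1.1 ≤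
            v.1.1 + a.1.1 - min v.1.2 a.1.1 + (v.1.2 + a.1.2 - min v.1.2 a.1.1)
          linarith)
  · exact key_cont Bsg.continuous_binv 0 (fun v => by
      show v.1.1 + v.1.2 - 0 ≤ v.1.2 + v.1.1; linarith)
end

section
/- Let S be a Hausdorff locally compact semitopological semigroup, let z ∈ S satisfy z·s = s·z = z for all s ∈ S, and let f : B_{[0,∞)} → S be an injective semigroup homomorphism with range S \ {z} which is a topological embedding of B^1_{[0,∞)} onto the subspace S \ {z}. Then either {z} is open in S, or the map F : OnePoint(B^1_{[0,∞)}) → S defined by F(∞) = z and F(x) = f(x) for x ∈ B_{[0,∞)} is a homeomorphism. -/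
/- `B^1_{[0,∞)}`: the topology on `Bsg` is the subspace topology inherited from `ℝ × ℝ`,
which is the default instance on the subtype. -/

/-- if `S` is a Hausdorff locally compact semitopological semigroup which is
`B^1_{[0,∞)}` with an adjoined zero `z`, then either `{z}` is open or `S` is the one-point
compactification of `B^1_{[0,∞)}` (via the canonical map). -/
theorem stmt5 {S : Type*} [TopologicalSpace S] [T2Space S] [LocallyCompactSpace S] [Semigroup S]
    (hsep : ∀ a : S, Continuous (fun x : S => a * x) ∧ Continuous (fun x : S => x * a))
    (z : S) (hz : ∀ s : S, z * s = z ∧ s * z = z)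
    (f : Bsg → S) (hinj : Function.Injective f)
    (hhom : ∀ u v : Bsg, f (u * v) = f u * f v)
    (hrange : Set.range f = ({z}ᶜ : Set S))
    (hemb : Topology.IsEmbedding f) :
    IsOpen ({z} : Set S) ∨
      IsHomeomorph (fun u : OnePoint Bsg => Option.elim u z f) := by
  classical
  by_cases hzo : IsOpen ({z} : Set S)
  · exact Or.inl hzo
  right
  clear hsep hz hhom
  -- the "norm" function on Bsg
  set σ : Bsg → ℝ := fun p => p.1.1 + p.1.2 with hσdef
  have hσc : Continuous σ := by
    have : Continuous (Subtype.val : Bsg → ℝ × ℝ) := continuous_subtype_val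
    exact (continuous_fst.comp this).add (continuous_snd.comp this)
  have hfz : ∀ p : Bsg, f p ≠ z := by
    intro p h
    have hm : f p ∈ Set.range f := Set.mem_range_self p
    rw [hrange] at hm
    exact hm (by simp [h])
  have hmemrange : ∀ s : S, s ≠ z → s ∈ Set.range f := by
    intro s hs; rw [hrange]; exact hs
  have hopenemb : Topology.IsOpenEmbedding f :=
    ⟨hemb, by rw [hrange]; exact isOpen_compl_singleton⟩
  -- bounded subsets of Bsg are compact
  have hcpt : ∀ M : ℝ, IsCompact {p : Bsg | σ p ≤ M} := by
    intro M
    rw [Topology.IsEmbedding.subtypeVal.isCompact_iff]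
    have himg : Subtype.val '' {p : Bsg | σ p ≤ M}
        = {q : ℝ × ℝ | (0 ≤ q.1 ∧ 0 ≤ q.2) ∧ q.1 + q.2 ≤ M} := by
      ext q
      constructor
      · rintro ⟨p, hp, rfl⟩; exact ⟨p.2, hp⟩
      · rintro ⟨hq, hs⟩; exact ⟨⟨q, hq⟩, hs, rfl⟩
    rw [himg]
    have hcl : IsClosed {q : ℝ × ℝ | (0 ≤ q.1 ∧ 0 ≤ q.2) ∧ q.1 + q.2 ≤ M} := by
      simp only [Set.setOf_and]
      exact ((isClosed_le continuous_const continuous_fst).inter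
        (isClosed_le continuous_const continuous_snd)).inter
        (isClosed_le (continuous_fst.add continuous_snd) continuous_const)
    refine IsCompact.of_isClosed_subset (isCompact_Icc (a := ((0:ℝ),(0:ℝ))) (b := (M, M))) hcl ?_
    rintro q ⟨⟨h1, h2⟩, h3⟩
    simp only [Set.mem_Icc, Prod.le_def]
    exact ⟨⟨h1, h2⟩, by linarith, by linarith⟩
  -- the closed "far" sets in S
  have hHcl : ∀ M : ℝ, IsClosed ({z} ∪ f '' {p : Bsg | M ≤ σ p}) := by
    intro M
    rw [← isOpen_compl_iff]
    have hcompl : ({z} ∪ f '' {p : Bsg | M ≤ σ p})ᶜ = f '' {p : Bsg | σ p < M} := by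
      ext s
      simp only [Set.mem_compl_iff, Set.mem_union, Set.mem_singleton_iff, Set.mem_image,
        Set.mem_setOf_eq, not_or, not_exists]
      constructor
      · rintro ⟨hsz, him⟩
        obtain ⟨p, rfl⟩ := hmemrange s hsz
        refine ⟨p, ?_, rfl⟩
        by_contra hle
        exact (him p) ⟨not_lt.mp hle, rfl⟩
      · rintro ⟨p, hp, rfl⟩
        refine ⟨hfz p, ?_⟩
        rintro q ⟨hq, hqe⟩
        have hqp := hinj hqe
        subst hqp
        exact absurd hp (not_lt.mpr hq)
    rw [hcompl]
    exact hopenemb.isOpenMap _ (isOpen_lt hσc continuous_const)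
  -- a compact neighborhood of z
  obtain ⟨K, hKc, hKn⟩ := exists_compact_mem_nhds z
  have hzU : z ∈ interior K := mem_interior_iff_mem_nhds.mpr hKn
  -- Key fact: far points of K are in the interior of K
  have hF4 : ∃ M : ℝ, ∀ s ∈ K, s ∈ ({z} ∪ f '' {p : Bsg | M ≤ σ p}) → s ∈ interior K := by
    by_contra hcon
    push_neg at hcon
    have hne := IsCompact.nonempty_iInter_of_directed_nonempty_isCompact_isClosed
      (fun M : ℝ => K ∩ (({z} ∪ f '' {p : Bsg | M ≤ σ p}) ∩ (interior K)ᶜ))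
      ?_ ?_ ?_ ?_
    · obtain ⟨x, hx⟩ := hne
      simp only [Set.mem_iInter] at hx
      obtain ⟨hxK, hxH, hxI⟩ := hx 0
      rcases hxH with hxz | ⟨p, -, rfl⟩
      · rw [Set.mem_singleton_iff] at hxz
        subst hxz
        exact hxI hzU
      · obtain ⟨-, hH2, -⟩ := hx (σ p + 1)
        rcases hH2 with hxz | ⟨q, hq, hqe⟩
        · exact hfz p hxz
        · have hqp := hinj hqe
          subst hqp
          have hq' : σ q + 1 ≤ σ q := hq
          linarith
    · intro M M'
      refine ⟨max M M', ?_, ?_⟩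
      · rintro s ⟨hsK, hsH, hsI⟩
        refine ⟨hsK, ?_, hsI⟩
        rcases hsH with h | ⟨p, hp, rfl⟩
        · exact Or.inl h
        · have hp' : max M M' ≤ σ p := hp
          exact Or.inr ⟨p, le_trans (le_max_left M M') hp', rfl⟩
      · rintro s ⟨hsK, hsH, hsI⟩
        refine ⟨hsK, ?_, hsI⟩
        rcases hsH with h | ⟨p, hp, rfl⟩
        · exact Or.inl h
        · have hp' : max M M' ≤ σ p := hp
          exact Or.inr ⟨p, le_trans (le_max_right M M') hp', rfl⟩
    · intro M
      obtain ⟨s, hsK, hsH, hsI⟩ := hcon M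
      exact ⟨s, hsK, hsH, hsI⟩
    · intro M
      exact hKc.inter_right ((hHcl M).inter isOpen_interior.isClosed_compl)
    · intro M
      exact (hKc.isClosed).inter ((hHcl M).inter isOpen_interior.isClosed_compl)
  obtain ⟨M₀, hM₀⟩ := hF4
  -- since z is not isolated, there are far points of B inside interior K
  have hpt : ∀ M : ℝ, ∃ p : Bsg, f p ∈ interior K ∧ M < σ p := by
    intro M
    have hBc : IsCompact (f '' {p : Bsg | σ p ≤ M}) := (hcpt M).image hemb.continuous
    have hV : IsOpen (interior K ∩ (f '' {p : Bsg | σ p ≤ M})ᶜ) :=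
      isOpen_interior.inter hBc.isClosed.isOpen_compl
    have hzV : z ∈ interior K ∩ (f '' {p : Bsg | σ p ≤ M})ᶜ := by
      refine ⟨hzU, ?_⟩
      rintro ⟨p, -, hp⟩
      exact hfz p hp
    have hnsub : ¬ (interior K ∩ (f '' {p : Bsg | σ p ≤ M})ᶜ ⊆ {z}) := by
      intro hsub
      have heq : ({z} : Set S) = interior K ∩ (f '' {p : Bsg | σ p ≤ M})ᶜ :=
        subset_antisymm (by rintro s rfl; exact hzV) hsub
      exact hzo (heq ▸ hV)
    obtain ⟨s, hsV, hsz⟩ := Set.not_subset.mp hnsub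
    obtain ⟨p, rfl⟩ := hmemrange s hsz
    refine ⟨p, hsV.1, ?_⟩
    by_contra h
    exact hsV.2 ⟨p, not_lt.mp h, rfl⟩
  -- the far region of Bsg is preconnected
  have hGpre : IsPreconnected {p : Bsg | M₀ < σ p} := by
    have himg : Subtype.val '' {p : Bsg | M₀ < σ p}
        = {q : ℝ × ℝ | (0 ≤ q.1 ∧ 0 ≤ q.2) ∧ M₀ < q.1 + q.2} := by
      ext q
      constructor
      · rintro ⟨p, hp, rfl⟩; exact ⟨p.2, hp⟩
      · rintro ⟨hq, hs⟩; exact ⟨⟨q, hq⟩, hs, rfl⟩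
    have hconv : IsPreconnected {q : ℝ × ℝ | (0 ≤ q.1 ∧ 0 ≤ q.2) ∧ M₀ < q.1 + q.2} := by
      have hkey : ∀ x1 x2 y1 y2 a b : ℝ, M₀ < x1 + x2 → M₀ < y1 + y2 → 0 ≤ a → 0 ≤ b →
          a + b = 1 → M₀ < a * x1 + b * y1 + (a * x2 + b * y2) := by
        intro x1 x2 y1 y2 a b hx hy ha hb hab
        rcases ha.eq_or_lt with h | h
        · obtain rfl : a = 0 := h.symm
          obtain rfl : b = 1 := by linarith
          simp only [zero_mul, one_mul, zero_add]
          linarith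
        · have h1 : a * M₀ < a * (x1 + x2) := mul_lt_mul_of_pos_left hx h
          have h2 : b * M₀ ≤ b * (y1 + y2) := mul_le_mul_of_nonneg_left hy.le hb
          have h3 : a * M₀ + b * M₀ = M₀ := by rw [← add_mul, hab, one_mul]
          nlinarith [h1, h2, h3]
      apply Convex.isPreconnected
      rintro x ⟨⟨hx1, hx2⟩, hx3⟩ y ⟨⟨hy1, hy2⟩, hy3⟩ a b ha hb hab
      simp only [Set.mem_setOf_eq, Prod.fst_add, Prod.snd_add, Prod.smul_fst, Prod.smul_snd,
        smul_eq_mul]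
      refine ⟨⟨?_, ?_⟩, ?_⟩
      · exact add_nonneg (mul_nonneg ha hx1) (mul_nonneg hb hy1)
      · exact add_nonneg (mul_nonneg ha hx2) (mul_nonneg hb hy2)
      · exact hkey _ _ _ _ _ _ hx3 hy3 ha hb hab
    have h2 := (Topology.IsEmbedding.subtypeVal
      (p := fun q : ℝ × ℝ => 0 ≤ q.1 ∧ 0 ≤ q.2)).toIsInducing
    exact h2.isPreconnected_image.mp (by rw [himg]; exact hconv)
  -- the main consequence: all far points of Bsg are mapped into interior K
  have hmain : ∀ p : Bsg, M₀ < σ p → f p ∈ interior K := by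
    have hu : IsOpen (f ⁻¹' interior K) := isOpen_interior.preimage hemb.continuous
    have hv : IsOpen ((f ⁻¹' K)ᶜ) := (hKc.isClosed.preimage hemb.continuous).isOpen_compl
    have hdisj : Disjoint (f ⁻¹' interior K) ((f ⁻¹' K)ᶜ) := by
      rw [Set.disjoint_left]
      intro p h1 h2
      have h1' : f p ∈ interior K := h1
      exact h2 (Set.mem_preimage.mpr (interior_subset h1'))
    have hsub : {p : Bsg | M₀ < σ p} ⊆ (f ⁻¹' interior K) ∪ (f ⁻¹' K)ᶜ := by
      intro p hp
      have hp' : M₀ < σ p := hp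
      by_cases hK : f p ∈ K
      · exact Or.inl (hM₀ (f p) hK (Or.inr ⟨p, show M₀ ≤ σ p from hp'.le, rfl⟩))
      · exact Or.inr hK
    obtain ⟨p₀, hp₀U, hp₀σ⟩ := hpt M₀
    rcases hGpre.subset_or_subset hu hv hdisj hsub with h | h
    · intro p hp; exact h hp
    · have hmem : p₀ ∈ {p : Bsg | M₀ < σ p} := hp₀σ
      exact absurd (Set.mem_preimage.mpr (interior_subset hp₀U)) (h hmem)
  -- continuity of the extension
  set F : OnePoint Bsg → S := fun u => Option.elim u z f with hFdef
  have hFc : Continuous F := by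
    rw [OnePoint.continuous_iff]
    constructor
    · have hFi : F OnePoint.infty = z := rfl
      rw [hFi, Filter.tendsto_def]
      intro N hN
      obtain ⟨O, hON, hOopen, hzO⟩ := mem_nhds_iff.mp hN
      simp only [Filter.hasBasis_coclosedCompact.mem_iff, and_assoc]
      refine ⟨(f ⁻¹' O)ᶜ, (hOopen.preimage hemb.continuous).isClosed_compl, ?_, ?_⟩
      · have hKO : IsCompact (K ∩ Oᶜ) := hKc.inter_right hOopen.isClosed_compl
        have hKOr : K ∩ Oᶜ ⊆ Set.range f := by
          rintro s ⟨hsK, hsO⟩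
          exact hmemrange s (fun h => hsO (h ▸ hzO))
        have hc1 : IsCompact (f ⁻¹' (K ∩ Oᶜ)) := by
          rw [hemb.isCompact_iff, Set.image_preimage_eq_of_subset hKOr]
          exact hKO
        refine IsCompact.of_isClosed_subset (hc1.union (hcpt M₀))
          (hOopen.preimage hemb.continuous).isClosed_compl ?_
        intro p hp
        by_cases hM : σ p ≤ M₀
        · exact Or.inr hM
        · exact Or.inl ⟨interior_subset (hmain p (not_le.mp hM)), hp⟩
      · intro p hp
        have hpO : f p ∈ O := not_not.mp hp
        exact hON hpO
    · exact hemb.continuous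
  -- bijectivity
  have hbij : Function.Bijective F := by
    constructor
    · intro u v huv
      match u, v with
      | none, none => rfl
      | none, some p => exact absurd huv.symm (hfz p)
      | some p, none => exact absurd huv (hfz p)
      | some p, some q => exact congrArg some (hinj huv)
    · intro s
      by_cases hs : s = z
      · exact ⟨none, hs.symm⟩
      · obtain ⟨p, rfl⟩ := hmemrange s hs
        exact ⟨some p, rfl⟩
  exact isHomeomorph_iff_continuous_bijective.mpr ⟨hFc, hbij⟩
end

section
/- Let S be the semigroup B^1_{[0,∞)} with an adjoined compact ideal I, and assume in addition that the multiplication of S is jointly continuous (S is a topological semigroup). Then I is an open subset of S. -/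
/- `B^1_{[0,∞)}`: the topology on `Bsg` is the subspace topology inherited from `ℝ × ℝ`,
which is the default instance on the subtype. -/

open Filter Topology

/-- The "far" region `{max coords > R}` of `Bsg` is preconnected. -/
lemma stmt6_aux_preconnected (R : ℝ) (hR : 0 ≤ R) :
    IsPreconnected ({u : Bsg | R < u.1.1} ∪ {u : Bsg | R < u.1.2}) := by
  have hfst : IsLinearMap ℝ (Prod.fst : ℝ × ℝ → ℝ) := ⟨fun _ _ => rfl, fun _ _ => rfl⟩
  have hsnd : IsLinearMap ℝ (Prod.snd : ℝ × ℝ → ℝ) := ⟨fun _ _ => rfl, fun _ _ => rfl⟩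
  have h1 : IsPreconnected {u : Bsg | R < u.1.1} := by
    have him : (Subtype.val '' {u : Bsg | R < u.1.1})
        = {p : ℝ × ℝ | (0 ≤ p.1 ∧ 0 ≤ p.2) ∧ R < p.1} := by
      ext p
      constructor
      · rintro ⟨u, hu, rfl⟩; exact ⟨⟨u.2.1, u.2.2⟩, hu⟩
      · rintro ⟨⟨hp1, hp2⟩, hp3⟩; exact ⟨⟨p, hp1, hp2⟩, hp3, rfl⟩
    have hpre : IsPreconnected (Subtype.val '' {u : Bsg | R < u.1.1}) := by
      rw [him]
      exact (((convex_halfSpace_ge hfst 0).inter (convex_halfSpace_ge hsnd 0)).inter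
        (convex_halfSpace_gt hfst R)).isPreconnected
    exact Topology.IsInducing.subtypeVal.isPreconnected_image.mp hpre
  have h2 : IsPreconnected {u : Bsg | R < u.1.2} := by
    have him : (Subtype.val '' {u : Bsg | R < u.1.2})
        = {p : ℝ × ℝ | (0 ≤ p.1 ∧ 0 ≤ p.2) ∧ R < p.2} := by
      ext p
      constructor
      · rintro ⟨u, hu, rfl⟩; exact ⟨⟨u.2.1, u.2.2⟩, hu⟩
      · rintro ⟨⟨hp1, hp2⟩, hp3⟩; exact ⟨⟨p, hp1, hp2⟩, hp3, rfl⟩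
    have hpre : IsPreconnected (Subtype.val '' {u : Bsg | R < u.1.2}) := by
      rw [him]
      exact (((convex_halfSpace_ge hfst 0).inter (convex_halfSpace_ge hsnd 0)).inter
        (convex_halfSpace_gt hsnd R)).isPreconnected
    exact Topology.IsInducing.subtypeVal.isPreconnected_image.mp hpre
  have hx0 : (0:ℝ) ≤ R + 1 := by linarith
  exact IsPreconnected.union (⟨(R + 1, R + 1), hx0, hx0⟩ : Bsg)
    (lt_add_one R) (lt_add_one R) h1 h2

/-- Bounded corner boxes of `Bsg` are compact. -/
lemma stmt6_aux_compact (R : ℝ) : IsCompact {u : Bsg | u.1.1 ≤ R ∧ u.1.2 ≤ R} := by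
  rw [Subtype.isCompact_iff]
  have him : (Subtype.val '' {u : Bsg | u.1.1 ≤ R ∧ u.1.2 ≤ R})
      = Set.Icc ((0:ℝ), (0:ℝ)) (R, R) := by
    ext p
    simp only [Set.mem_image, Set.mem_Icc, Prod.le_def]
    constructor
    · rintro ⟨u, hu, rfl⟩
      exact ⟨⟨u.2.1, u.2.2⟩, hu.1, hu.2⟩
    · rintro ⟨⟨hp1, hp2⟩, hp3, hp4⟩
      exact ⟨⟨p, hp1, hp2⟩, ⟨hp3, hp4⟩, rfl⟩
  rw [him]
  exact isCompact_Icc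

/-- if in addition the multiplication of `S` is jointly continuous, then `I`
is open. -/
theorem stmt6 {S : Type*} [TopologicalSpace S] [T2Space S] [LocallyCompactSpace S] [Semigroup S]
    (hsep : ∀ a : S, Continuous (fun x : S => a * x) ∧ Continuous (fun x : S => x * a))
    (I : Set S) (hne : I.Nonempty) (hIcomp : IsCompact I)
    (hIdeal : ∀ s : S, ∀ a ∈ I, s * a ∈ I ∧ a * s ∈ I)
    (f : Bsg → S) (hinj : Function.Injective f)
    (hhom : ∀ u v : Bsg, f (u * v) = f u * f v)
    (hrange : Set.range f = Iᶜ)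
    (hemb : Topology.IsEmbedding f)
    (hjoint : Continuous (fun p : S × S => p.1 * p.2)) :
    IsOpen I := by
  classical
  by_contra hI
  -- Get a point `a ∈ I` in the closure of the complement.
  have hnc : ¬ closure Iᶜ ⊆ Iᶜ := by
    intro h
    exact hI (by simpa using (isClosed_of_closure_subset h).isOpen_compl)
  obtain ⟨a, hacl, haI⟩ := Set.not_subset.mp hnc
  rw [Set.notMem_compl_iff] at haI
  -- The preimage filter of `𝓝 a` under `f`.
  have hGne : (Filter.comap f (𝓝 a)).NeBot := by
    rw [Filter.comap_neBot_iff]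
    intro t ht
    obtain ⟨z, hzt, hzc⟩ := mem_closure_iff_nhds.mp hacl t ht
    rw [← hrange] at hzc
    obtain ⟨u, rfl⟩ := hzc
    exact ⟨u, hzt⟩
  -- Sandwich compact neighborhoods of `I`.
  obtain ⟨K₁, hK₁c, hIK₁⟩ := exists_compact_superset hIcomp
  obtain ⟨K₂, hK₂c, hK₁K₂⟩ := exists_compact_superset hK₁c
  have hUopen : IsOpen (interior K₁) := isOpen_interior
  have hCc : IsCompact (K₂ \ interior K₁) := hK₂c.diff hUopen
  have hCrange : K₂ \ interior K₁ ⊆ Set.range f := by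
    intro z hz
    rw [hrange]
    intro hzI
    exact hz.2 (hIK₁ hzI)
  have hFc : IsCompact (f ⁻¹' (K₂ \ interior K₁)) :=
    hemb.isCompact_iff.mpr (by rwa [Set.image_preimage_eq_of_subset hCrange])
  -- A bound `R` for the compact preimage.
  obtain ⟨R₀, hR₀⟩ :=
    (hFc.image (by fun_prop : Continuous fun u : Bsg => max u.1.1 u.1.2)).bddAbove
  set R : ℝ := max R₀ 0 with hRdef
  have hR0 : (0:ℝ) ≤ R := le_max_right _ _
  have hFR : ∀ u : Bsg, f u ∈ K₂ \ interior K₁ → max u.1.1 u.1.2 ≤ R :=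
    fun u hu => le_trans (hR₀ ⟨u, hu, rfl⟩) (le_max_left _ _)
  -- The connected "far" region.
  set BR : Set Bsg := {u : Bsg | R < u.1.1} ∪ {u : Bsg | R < u.1.2} with hBRdef
  -- `BR` belongs to the preimage filter (the filter escapes every compact set).
  have hKsetc : IsCompact BRᶜ := by
    have : BRᶜ = {u : Bsg | u.1.1 ≤ R ∧ u.1.2 ≤ R} := by
      ext u
      simp only [hBRdef, Set.mem_compl_iff, Set.mem_union, Set.mem_setOf_eq, not_or, not_lt]
    rw [this]
    exact stmt6_aux_compact R
  have hBRG : BR ∈ Filter.comap f (𝓝 a) := by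
    have hbot : Filter.comap f (𝓝 a) ⊓ Filter.principal BRᶜ = ⊥ := by
      by_contra hbot
      haveI : (Filter.comap f (𝓝 a) ⊓ Filter.principal BRᶜ).NeBot := ⟨hbot⟩
      obtain ⟨u, _, hu⟩ := hKsetc.exists_clusterPt
        (f := Filter.comap f (𝓝 a) ⊓ Filter.principal BRᶜ) inf_le_right
      have h1 : (𝓝 u ⊓ Filter.comap f (𝓝 a)).NeBot := hu.mono inf_le_left
      have h2 : (𝓝 (f u) ⊓ 𝓝 a).NeBot := by
        have hmap : (Filter.map f (𝓝 u ⊓ Filter.comap f (𝓝 a))).NeBot := h1.map f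
        refine hmap.mono (le_inf ?_ ?_)
        · exact le_trans (Filter.map_mono inf_le_left) (hemb.continuous.tendsto u)
        · exact le_trans (Filter.map_mono inf_le_right) Filter.map_comap_le
      have hfu : f u = a := eq_of_nhds_neBot h2
      have : a ∈ Set.range f := ⟨u, hfu⟩
      rw [hrange] at this
      exact this haI
    have := Filter.inf_principal_eq_bot.mp hbot
    rwa [compl_compl] at this
  -- A point of `BR` mapped into `interior K₁`.
  have hUa : interior K₁ ∈ 𝓝 a := hUopen.mem_nhds (hIK₁ haI)
  obtain ⟨u₀, hu₀⟩ :=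
    hGne.nonempty_of_mem (Filter.inter_mem (Filter.preimage_mem_comap hUa) hBRG)
  have hu₀U : f u₀ ∈ interior K₁ := hu₀.1
  have hu₀R : u₀ ∈ BR := hu₀.2
  -- `BR` is preconnected, so its image avoids `K₂ᶜ` and stays in `K₁`.
  have hBRpre : IsPreconnected BR := stmt6_aux_preconnected R hR0
  have hPpre : IsPreconnected (f '' BR) := hBRpre.image f hemb.continuous.continuousOn
  have hVopen : IsOpen K₂ᶜ := hK₂c.isClosed.isOpen_compl
  have hnotC : ∀ w ∈ BR, f w ∉ K₂ \ interior K₁ := by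
    intro w hw hwC
    have hle := hFR w hwC
    rcases hw with hw | hw
    · exact absurd (le_trans (le_max_left _ _) hle) (not_le.mpr hw)
    · exact absurd (le_trans (le_max_right _ _) hle) (not_le.mpr hw)
  have hcover : f '' BR ⊆ interior K₁ ∪ K₂ᶜ := by
    rintro z ⟨w, hw, rfl⟩
    by_cases hz : f w ∈ K₂
    · left
      by_contra hzU
      exact hnotC w hw ⟨hz, hzU⟩
    · right; exact hz
  have hkey : ∀ w ∈ BR, f w ∈ K₁ := by
    intro w hw
    rcases hcover ⟨w, hw, rfl⟩ with h | h
    · exact interior_subset h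
    · exfalso
      obtain ⟨z, _, hz⟩ := hPpre (interior K₁) K₂ᶜ hUopen hVopen hcover
        ⟨f u₀, ⟨u₀, hu₀R, rfl⟩, hu₀U⟩ ⟨f w, ⟨w, hw, rfl⟩, h⟩
      exact hz.2 (interior_subset (hK₁K₂ (interior_subset hz.1)))
  -- The two escaping one-parameter families.
  have hv : ∀ n : ℕ, (0:ℝ) ≤ (n:ℝ) := fun n => Nat.cast_nonneg n
  set vt : ℕ → Bsg := fun n => ⟨((0:ℝ), (n:ℝ)), le_refl 0, hv n⟩ with hvt
  set wt : ℕ → Bsg := fun n => ⟨((n:ℝ), (0:ℝ)), hv n, le_refl 0⟩ with hwt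
  set e₀ : Bsg := ⟨((0:ℝ), (0:ℝ)), le_refl 0, le_refl 0⟩ with he₀
  have hmul : ∀ n : ℕ, vt n * wt n = e₀ := by
    intro n
    show Bsg.bmul (vt n) (wt n) = e₀
    apply Subtype.ext
    simp [Bsg.bmul, hvt, hwt, he₀]
  set 𝒰 : Ultrafilter ℕ := Ultrafilter.of Filter.atTop with h𝒰def
  have h𝒰 : (𝒰 : Filter ℕ) ≤ Filter.atTop := Ultrafilter.of_le _
  have hev : ∀ᶠ (n : ℕ) in (𝒰 : Filter ℕ), R < (n : ℝ) := by
    refine h𝒰 ?_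
    filter_upwards [Filter.eventually_ge_atTop (⌈R⌉₊ + 1)] with n hn
    calc R ≤ (⌈R⌉₊ : ℝ) := Nat.le_ceil R
    _ < ((⌈R⌉₊ + 1 : ℕ) : ℝ) := by push_cast; linarith
    _ ≤ (n : ℝ) := by exact_mod_cast hn
  have hvK : ∀ᶠ (n : ℕ) in (𝒰 : Filter ℕ), f (vt n) ∈ K₁ := by
    filter_upwards [hev] with n hn
    exact hkey (vt n) (Or.inr hn)
  have hwK : ∀ᶠ (n : ℕ) in (𝒰 : Filter ℕ), f (wt n) ∈ K₁ := by
    filter_upwards [hev] with n hn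
    exact hkey (wt n) (Or.inl hn)
  obtain ⟨b, hbK, hb⟩ := hK₁c.ultrafilter_le_nhds (𝒰.map (fun n => f (vt n)))
    (by rwa [Ultrafilter.coe_map, Filter.le_principal_iff, Filter.mem_map])
  obtain ⟨c, hcK, hc⟩ := hK₁c.ultrafilter_le_nhds (𝒰.map (fun n => f (wt n)))
    (by rwa [Ultrafilter.coe_map, Filter.le_principal_iff, Filter.mem_map])
  rw [Ultrafilter.coe_map] at hb hc
  have hbT : Filter.Tendsto (fun n => f (vt n)) (𝒰 : Filter ℕ) (𝓝 b) := hb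
  have hcT : Filter.Tendsto (fun n => f (wt n)) (𝒰 : Filter ℕ) (𝓝 c) := hc
  have hprod : Filter.Tendsto (fun n => f (vt n) * f (wt n)) (𝒰 : Filter ℕ) (𝓝 (b * c)) :=
    (hjoint.tendsto (b, c)).comp (hbT.prodMk_nhds hcT)
  have hconst : (fun n => f (vt n) * f (wt n)) = fun _ => f e₀ := by
    funext n
    rw [← hhom, hmul]
  rw [hconst] at hprod
  have hbc : f e₀ = b * c := tendsto_nhds_unique tendsto_const_nhds hprod
  -- `b ∈ I`.
  have hbI : b ∈ I := by
    by_contra hbI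
    have hbr : b ∈ Set.range f := by rw [hrange]; exact hbI
    obtain ⟨p, rfl⟩ := hbr
    have hT : Filter.Tendsto vt (𝒰 : Filter ℕ) (𝓝 p) := hemb.tendsto_nhds_iff.mpr hbT
    have hcont : Continuous (fun u : Bsg => u.1.2) := by fun_prop
    have h1 : Filter.Tendsto (fun n : ℕ => (n : ℝ)) (𝒰 : Filter ℕ) (𝓝 p.1.2) :=
      (hcont.tendsto p).comp hT
    have h2 : Filter.Tendsto (fun n : ℕ => (n : ℝ)) (𝒰 : Filter ℕ) Filter.atTop :=
      tendsto_natCast_atTop_atTop.mono_left h𝒰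
    exact not_tendsto_nhds_of_tendsto_atTop h2 _ h1
  have hmem : f e₀ ∈ Iᶜ := by rw [← hrange]; exact ⟨e₀, rfl⟩
  exact hmem (by rw [hbc]; exact (hIdeal c b hbI).2)
end

section
/- Let S be the semigroup B^2_{[0,∞)} with an adjoined compact ideal I (with embedding homomorphism f), and assume that I is not open in S. Then for every open set U ⊆ S with I ⊆ U whose closure is compact, there exist finite sets A, C ⊆ [0,∞) such that S \ U ⊆ f(⋃_{α∈A} L_α^+ ∪ ⋃_{α∈C} L_α^−). -/
/-- The topology `τ_L`, induced by the injection `(a,b) ↦ (b−a, min(a,b))` into `ℝ_d × ℝ`,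
where the first factor carries the discrete topology. -/
def tauL : TopologicalSpace Bsg :=
  TopologicalSpace.induced (fun p : Bsg => ((p.1.2 - p.1.1, min p.1.1 p.1.2) : ℝ × ℝ))
    (@instTopologicalSpaceProd ℝ ℝ ⊥ inferInstance)

/- `B^2_{[0,∞)}`: we equip `Bsg` with the topology `τ_L`. -/
instance (priority := 2000) : TopologicalSpace Bsg := tauL

namespace Stmt7Aux
open Bsg Filter Topology Set

def Rd : Type := ℝ
instance : TopologicalSpace Rd := ⊥
instance : DiscreteTopology Rd := ⟨rfl⟩

def dl (p : Bsg) : ℝ := p.1.2 - p.1.1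
def pos (p : Bsg) : ℝ := min p.1.1 p.1.2
def toRd (x : ℝ) : Rd := x
def dlr (p : Bsg) : Rd := dl p
def Fm (p : Bsg) : Rd × ℝ := (dlr p, pos p)

lemma cont_Fm : Continuous Fm := continuous_induced_dom

lemma cont_dlr : Continuous dlr := continuous_fst.comp cont_Fm

lemma cont_pos : Continuous pos := continuous_snd.comp cont_Fm

lemma pos_nonneg (p : Bsg) : 0 ≤ pos p := le_min p.2.1 p.2.2

def phi (r x : ℝ) : Bsg :=
  ⟨(max x 0 + max (-r) 0, max x 0 + max r 0),
   ⟨add_nonneg (le_max_right _ _) (le_max_right _ _),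
    add_nonneg (le_max_right _ _) (le_max_right _ _)⟩⟩

lemma dl_phi (r x : ℝ) : dl (phi r x) = r := by
  simp only [dl, phi]
  have := max_zero_sub_max_neg_zero_eq_self r
  linarith

lemma pos_phi (r x : ℝ) : pos (phi r x) = max x 0 := by
  simp only [pos, phi]
  rcases le_total r 0 with h | h
  · rw [min_eq_right]
    · simp [max_eq_right h]
    · have h1 : max r 0 = 0 := max_eq_right h
      have h2 : (0:ℝ) ≤ max (-r) 0 := le_max_right _ _
      rw [h1]; linarith
  · rw [min_eq_left]
    · simp [max_eq_right (neg_nonpos_of_nonneg h)]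
    · have h1 : max (-r) 0 = 0 := max_eq_right (neg_nonpos_of_nonneg h)
      have h2 : (0:ℝ) ≤ max r 0 := le_max_right _ _
      rw [h1]; linarith

lemma phi_eq (p : Bsg) : phi (dl p) (pos p) = p := by
  obtain ⟨⟨a, b⟩, ha, hb⟩ := p
  apply Subtype.ext
  simp only [phi, dl, pos]
  rcases le_total a b with h | h
  · rw [min_eq_left h, max_eq_left ha, max_eq_right (by linarith : -(b-a) ≤ 0),
      max_eq_left (by linarith : (0:ℝ) ≤ b - a)]
    exact Prod.ext (by ring) (by ring)
  · rw [min_eq_right h, max_eq_left hb, max_eq_left (by linarith : (0:ℝ) ≤ -(b-a)),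
      max_eq_right (by linarith : b - a ≤ 0)]
    exact Prod.ext (by ring) (by ring)

lemma cont_phi (r : ℝ) : Continuous (phi r) := by
  apply continuous_induced_rng.2
  show Continuous (Fm ∘ phi r)
  have h : (Fm ∘ phi r) = fun x => (toRd r, max x 0) := by
    funext x
    exact Prod.ext (dl_phi r x) (pos_phi r x)
  rw [h]
  exact continuous_const.prodMk (continuous_id.max continuous_const)

lemma dl_mul (u v : Bsg) : dl (u * v) = dl u + dl v := by
  show dl (bmul u v) = _
  simp only [dl, bmul]
  ring

lemma line_finite {C : Set Bsg} (hC : IsCompact C) : (dl '' C).Finite := by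
  have h : IsCompact (dlr '' C) := hC.image cont_dlr
  exact h.finite_of_discrete

end Stmt7Aux

open Stmt7Aux Filter Topology Set

open Bsg in
/-- if `I` is not open, then for every open `U ⊇ I` with compact closure there
are finite sets `A, C ⊆ [0,∞)` with `S \ U ⊆ f(⋃_{α∈A} L_α^+ ∪ ⋃_{α∈C} L_α^−)`. -/
theorem stmt7 {S : Type*} [TopologicalSpace S] [T2Space S] [LocallyCompactSpace S] [Semigroup S]
    (hsep : ∀ a : S, Continuous (fun x : S => a * x) ∧ Continuous (fun x : S => x * a))
    (I : Set S) (hne : I.Nonempty) (hIcomp : IsCompact I)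
    (hIdeal : ∀ s : S, ∀ a ∈ I, s * a ∈ I ∧ a * s ∈ I)
    (f : Bsg → S) (hinj : Function.Injective f)
    (hhom : ∀ u v : Bsg, f (u * v) = f u * f v)
    (hrange : Set.range f = Iᶜ)
    (hemb : Topology.IsEmbedding f)
    (hInotopen : ¬ IsOpen I)
    (U : Set S) (hU : IsOpen U) (hIU : I ⊆ U) (hUc : IsCompact (closure U)) :
    ∃ A C : Set ℝ, A.Finite ∧ C.Finite ∧ (∀ α ∈ A, (0:ℝ) ≤ α) ∧ (∀ α ∈ C, (0:ℝ) ≤ α) ∧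
      Set.univ \ U ⊆ f '' ((⋃ α ∈ A, Lplus α) ∪ ⋃ α ∈ C, Lminus α) := by
  classical
  have hIclosed : IsClosed I := hIcomp.isClosed
  have hrangeopen : IsOpen (Set.range f) := by rw [hrange]; exact hIclosed.isOpen_compl
  have hcontf : Continuous f := hemb.continuous
  set E : Set S := closure U \ U with hE
  have hEcomp : IsCompact E := hUc.of_isClosed_subset (isClosed_closure.sdiff hU) diff_subset
  have hEsub : E ⊆ Set.range f := by
    rw [hrange]; intro x hx hxI; exact hx.2 (hIU hxI)
  have hF0comp : IsCompact (f ⁻¹' E) := hemb.toIsInducing.isCompact_preimage' hEcomp hEsub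
  have hΛ : (dl '' (f ⁻¹' E)).Finite := line_finite hF0comp
  obtain ⟨M0, hM0⟩ : BddAbove (pos '' (f ⁻¹' E)) := (hF0comp.image cont_pos).bddAbove
  set M : ℝ := max M0 0 + 1 with hMdef
  have hMpos : (0:ℝ) < M := by
    have := le_max_right M0 0; rw [hMdef]; linarith
  have hposF0 : ∀ p ∈ f ⁻¹' E, pos p < M := by
    intro p hp
    have h1 : pos p ≤ M0 := hM0 (mem_image_of_mem _ hp)
    have := le_max_left M0 0
    rw [hMdef]; linarith
  -- the connectedness dichotomy on each line
  have hdich : ∀ r N : ℝ, (∀ x ∈ Ici N, f (phi r x) ∉ E) →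
      (Ici N ⊆ (fun x => f (phi r x)) ⁻¹' U) ∨
      (Ici N ⊆ (fun x => f (phi r x)) ⁻¹' (closure U)ᶜ) := by
    intro r N hcov
    have hgc : Continuous (fun x => f (phi r x)) := hcontf.comp (cont_phi r)
    refine IsPreconnected.subset_or_subset (hU.preimage hgc)
      (isClosed_closure.isOpen_compl.preimage hgc) ?_ ?_ isPreconnected_Ici
    · rw [Set.disjoint_left]
      intro x hxU hxC
      exact hxC (subset_closure hxU)
    · intro x hx
      by_cases hmem : f (phi r x) ∈ U
      · exact Or.inl hmem
      · refine Or.inr fun hcl => hcov x hx ⟨hcl, hmem⟩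
  -- Step A : some line has a tail inside U
  have hA : ∃ r₀ M' : ℝ, ∀ x : ℝ, M' ≤ x → f (phi r₀ x) ∈ U := by
    by_contra hA
    push_neg at hA
    set C0 : Set Bsg := ⋃ r ∈ dl '' (f ⁻¹' E), phi r '' Icc 0 M with hC0def
    have hC0comp : IsCompact C0 :=
      hΛ.isCompact_biUnion (fun r _ => isCompact_Icc.image (cont_phi r))
    have hUsub : f ⁻¹' U ⊆ C0 := by
      intro p hp
      have hpeq := phi_eq p
      have hcov : ∀ x ∈ Ici M, f (phi (dl p) x) ∉ E := by
        intro x hx hmem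
        have h1 : pos (phi (dl p) x) < M := hposF0 _ hmem
        rw [pos_phi, max_eq_left (le_trans (le_of_lt hMpos) hx)] at h1
        exact absurd hx (not_le.2 h1)
      have htail : Ici M ⊆ (fun x => f (phi (dl p) x)) ⁻¹' (closure U)ᶜ := by
        rcases hdich (dl p) M hcov with h | h
        · obtain ⟨x, hxM, hxU⟩ := hA (dl p) M
          exact absurd (h hxM) hxU
        · exact h
      have hrΛ : dl p ∈ dl '' (f ⁻¹' E) := by
        by_contra hr
        rcases hdich (dl p) 0 (fun x _ hmem => hr ⟨phi (dl p) x, hmem, dl_phi _ x⟩) with h | h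
        · obtain ⟨x, hx0, hxU⟩ := hA (dl p) 0
          exact hxU (h hx0)
        · have := h (pos_nonneg p)
          rw [Set.mem_preimage, hpeq] at this
          exact this (subset_closure hp)
      have hposlt : pos p < M := by
        by_contra hge
        push_neg at hge
        have := htail hge
        rw [Set.mem_preimage, hpeq] at this
        exact this (subset_closure hp)
      exact Set.mem_biUnion hrΛ ⟨pos p, ⟨pos_nonneg p, le_of_lt hposlt⟩, hpeq⟩
    have hfC0 : IsCompact (f '' C0) := hC0comp.image hcontf
    have hW : I = U ∩ (f '' C0)ᶜ := by
      ext w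
      constructor
      · intro hw
        refine ⟨hIU hw, fun hmem => ?_⟩
        have hwr : w ∈ Set.range f := image_subset_range f C0 hmem
        rw [hrange] at hwr
        exact hwr hw
      · rintro ⟨hwU, hwC⟩
        by_contra hwI
        have hwr : w ∈ Set.range f := by rw [hrange]; exact hwI
        obtain ⟨p, rfl⟩ := hwr
        exact hwC (mem_image_of_mem f (hUsub hwU))
    exact hInotopen (hW ▸ hU.inter hfC0.isClosed.isOpen_compl)
  obtain ⟨r₀, M', htail0⟩ := hA
  -- a cluster point of the tail of line r₀, lying in I
  set G : Filter S := Filter.map (fun x => f (phi r₀ x)) atTop with hGdef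
  have hGne : G.NeBot := Filter.map_neBot
  have hGle : G ≤ Filter.principal (closure U) := by
    rw [le_principal_iff, hGdef, Filter.mem_map]
    filter_upwards [Filter.Ici_mem_atTop M'] with x hx
    exact subset_closure (htail0 x hx)
  obtain ⟨z, hzK, hzcl⟩ := hUc.exists_clusterPt hGle
  have hzI : z ∈ I := by
    by_contra hzI
    have hzr : z ∈ Set.range f := by rw [hrange]; exact hzI
    obtain ⟨q, rfl⟩ := hzr
    have hnq : Filter.map f (nhds q) = nhds (f q) := by
      rw [hemb.map_nhds_eq, hrangeopen.nhdsWithin_eq (Set.mem_range_self q)]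
    have hGmap : G = Filter.map f (Filter.map (phi r₀) atTop) := by
      rw [Filter.map_map]; rfl
    have h0 : Filter.NeBot (nhds (f q) ⊓ G) := hzcl
    rw [hGmap, ← hnq, ← Filter.map_inf hinj] at h0
    have h1 : ClusterPt q (Filter.map (phi r₀) atTop) := (Filter.map_neBot_iff f).1 h0
    have h3 : Filter.Tendsto pos (Filter.map (phi r₀) atTop) atTop := by
      rw [Filter.tendsto_map'_iff]
      have hpp : (pos ∘ phi r₀) = fun x => max x 0 := funext (pos_phi r₀)
      rw [hpp]
      exact tendsto_atTop_mono (fun x => le_max_left x 0) tendsto_id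
    have h4 : ClusterPt (pos q) atTop := h1.map cont_pos.continuousAt h3
    exact h4.ne (disjoint_nhds_atTop (pos q)).eq_bot
  -- Step B : every line meets U
  have hB : ∀ r : ℝ, ∃ p : Bsg, dl p = r ∧ f p ∈ U := by
    intro r
    rcases le_total r₀ r with h | h
    · set q : Bsg := ⟨(0, r - r₀), le_refl 0, by show (0:ℝ) ≤ r - r₀; linarith⟩ with hqdef
      have hzq : z * f q ∈ I := (hIdeal (f q) z hzI).2
      have hcl2 : ClusterPt (z * f q) (Filter.map (fun s => s * f q) G) :=
        hzcl.map (hsep (f q)).2.continuousAt tendsto_map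
      have hUnhds : U ∈ nhds (z * f q) := hU.mem_nhds (hIU hzq)
      have hmem : Set.range (fun x => f (phi r₀ x) * f q) ∈
          Filter.map (fun s => s * f q) G := by
        rw [hGdef, Filter.map_map]
        exact Filter.range_mem_map
      have hne2 : (U ∩ Set.range (fun x => f (phi r₀ x) * f q)).Nonempty :=
        hcl2.nonempty_of_mem (Filter.inter_mem (mem_inf_of_left hUnhds)
          (mem_inf_of_right hmem))
      obtain ⟨s₀, hs₀U, x, hx⟩ := hne2
      have hx' : f (phi r₀ x) * f q = s₀ := hx
      refine ⟨phi r₀ x * q, ?_, ?_⟩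
      · rw [dl_mul, dl_phi]
        have : dl q = r - r₀ := by simp [hqdef, dl]
        rw [this]; ring
      · rw [hhom, hx']; exact hs₀U
    · set q : Bsg := ⟨(r₀ - r, 0), by show (0:ℝ) ≤ r₀ - r; linarith, le_refl 0⟩ with hqdef
      have hzq : f q * z ∈ I := (hIdeal (f q) z hzI).1
      have hcl2 : ClusterPt (f q * z) (Filter.map (fun s => f q * s) G) :=
        hzcl.map (hsep (f q)).1.continuousAt tendsto_map
      have hUnhds : U ∈ nhds (f q * z) := hU.mem_nhds (hIU hzq)
      have hmem : Set.range (fun x => f q * f (phi r₀ x)) ∈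
          Filter.map (fun s => f q * s) G := by
        rw [hGdef, Filter.map_map]
        exact Filter.range_mem_map
      have hne2 : (U ∩ Set.range (fun x => f q * f (phi r₀ x))).Nonempty :=
        hcl2.nonempty_of_mem (Filter.inter_mem (mem_inf_of_left hUnhds)
          (mem_inf_of_right hmem))
      obtain ⟨s₀, hs₀U, x, hx⟩ := hne2
      have hx' : f q * f (phi r₀ x) = s₀ := hx
      refine ⟨q * phi r₀ x, ?_, ?_⟩
      · rw [dl_mul, dl_phi]
        have : dl q = r - r₀ := by simp [hqdef, dl]
        rw [this]; ring
      · rw [hhom, hx']; exact hs₀U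
  -- conclusion
  refine ⟨dl '' (f ⁻¹' E) ∩ Ici 0, (fun t => -t) '' (dl '' (f ⁻¹' E)) ∩ Ici 0,
    hΛ.inter_of_left _, ((hΛ.image _).inter_of_left _),
    fun α hα => hα.2, fun α hα => hα.2, ?_⟩
  rintro s ⟨-, hsU⟩
  have hsI : s ∉ I := fun h => hsU (hIU h)
  have hsr : s ∈ Set.range f := by rw [hrange]; exact hsI
  obtain ⟨p, rfl⟩ := hsr
  have hrΛ : dl p ∈ dl '' (f ⁻¹' E) := by
    by_contra hr
    rcases hdich (dl p) 0 (fun x _ hmem => hr ⟨phi (dl p) x, hmem, dl_phi _ x⟩) with h | h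
    · have := h (pos_nonneg p)
      rw [Set.mem_preimage, phi_eq] at this
      exact hsU this
    · obtain ⟨p', hp'r, hp'U⟩ := hB (dl p)
      have := h (show pos p' ∈ Ici 0 from pos_nonneg p')
      rw [Set.mem_preimage, ← hp'r, phi_eq] at this
      exact this (subset_closure hp'U)
  rcases le_or_gt 0 (dl p) with hr0 | hr0
  · refine ⟨p, Or.inl (Set.mem_biUnion ⟨hrΛ, hr0⟩ ?_), rfl⟩
    show p.1.2 = p.1.1 + dl p
    simp [dl]
  · refine ⟨p, Or.inr (Set.mem_biUnion ⟨⟨dl p, hrΛ, rfl⟩, by simp only [Set.mem_Ici]; linarith⟩ ?_), rfl⟩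
    show p.1.1 = p.1.2 + -(dl p)
    simp [dl]
end

section
/- Let S be the semigroup B^2_{[0,∞)} with an adjoined compact ideal I (with embedding homomorphism f), and assume that I is not open in S. Then for every real number α ≥ 0 the sets f(L_α^+) ∪ I and f(L_α^−) ∪ I are compact subsets of S. -/
-- ============ auxiliary development ============
namespace Stmt8Aux
open Bsg Filter Set Topology

noncomputable def pt (t : ℝ) : Bsg := ⟨(max t 0, max t 0), le_max_right _ _, le_max_right _ _⟩
noncomputable def qof (β : ℝ) : Bsg := ⟨(max β 0, max (-β) 0), le_max_right _ _, le_max_right _ _⟩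
def dl (p : Bsg) : ℝ := p.1.2 - p.1.1
def indmap (p : Bsg) : ℝ × ℝ := (p.1.2 - p.1.1, min p.1.1 p.1.2)
def Tw : TopologicalSpace (ℝ × ℝ) := @instTopologicalSpaceProd ℝ ℝ ⊥ inferInstance

lemma mul_fst (p q : Bsg) : (p * q).1.1 = p.1.1 + q.1.1 - min p.1.2 q.1.1 := rfl
lemma mul_snd (p q : Bsg) : (p * q).1.2 = p.1.2 + q.1.2 - min p.1.2 q.1.1 := rfl
lemma pt_fst (t : ℝ) : (pt t).1.1 = max t 0 := rfl
lemma pt_snd (t : ℝ) : (pt t).1.2 = max t 0 := rfl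
lemma qof_fst (β : ℝ) : (qof β).1.1 = max β 0 := rfl
lemma qof_snd (β : ℝ) : (qof β).1.2 = max (-β) 0 := rfl

lemma bsg_ext {p q : Bsg} (h1 : p.1.1 = q.1.1) (h2 : p.1.2 = q.1.2) : p = q :=
  Subtype.ext (Prod.ext h1 h2)

lemma mul_pt_of_le {p : Bsg} {t : ℝ} (h : max t 0 ≤ p.1.2) : p * pt t = p := by
  exact bsg_ext (by rw [mul_fst, pt_fst, min_eq_right h]; ring)
    (by rw [mul_snd, pt_snd, pt_fst, min_eq_right h]; ring)

lemma mul_pt_fst_of_ge {p : Bsg} {t : ℝ} (h : p.1.2 ≤ max t 0) :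
    (p * pt t).1.1 = p.1.1 + max t 0 - p.1.2 := by
  rw [mul_fst, pt_fst, min_eq_left h]

lemma mul_pt_snd_of_ge {p : Bsg} {t : ℝ} (h : p.1.2 ≤ max t 0) :
    (p * pt t).1.2 = max t 0 := by
  rw [mul_snd, pt_snd, pt_fst, min_eq_left h]; ring

lemma pt_mul_of_le {p : Bsg} {t : ℝ} (h : max t 0 ≤ p.1.1) : pt t * p = p := by
  exact bsg_ext (by rw [mul_fst, pt_fst, pt_snd, min_eq_left h]; ring)
    (by rw [mul_snd, pt_snd, min_eq_left h]; ring)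

lemma pt_mul_fst_of_ge {p : Bsg} {t : ℝ} (h : p.1.1 ≤ max t 0) :
    (pt t * p).1.1 = max t 0 := by
  rw [mul_fst, pt_fst, pt_snd, min_eq_right h]; ring

lemma dl_mul_pt (p : Bsg) (t : ℝ) : dl (p * pt t) = dl p := by
  simp only [dl, mul_fst, mul_snd, pt_fst, pt_snd]; ring

lemma mul_qof (p : Bsg) : p * qof (dl p) = pt p.1.1 := by
  have h1 := p.2.1; have h2 := p.2.2
  have hptf : (pt p.1.1).1.1 = p.1.1 := by rw [pt_fst]; exact max_eq_left h1
  have hpts : (pt p.1.1).1.2 = p.1.1 := by rw [pt_snd]; exact max_eq_left h1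
  rcases le_total p.1.1 p.1.2 with h | h
  · have hd1 : max (dl p) 0 = dl p := max_eq_left (by simp [dl]; linarith)
    have hd2 : max (-dl p) 0 = 0 := max_eq_right (by simp [dl]; linarith)
    have hmin : min p.1.2 (qof (dl p)).1.1 = dl p := by
      rw [qof_fst, hd1]; exact min_eq_right (by simp [dl]; linarith)
    refine bsg_ext ?_ ?_
    · rw [mul_fst, hmin, qof_fst, hd1, hptf]; ring
    · rw [mul_snd, hmin, qof_snd, hd2, hpts]; simp only [dl]; ring
  · have hd1 : max (dl p) 0 = 0 := max_eq_right (by simp [dl]; linarith)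
    have hd2 : max (-dl p) 0 = -dl p := max_eq_left (by simp [dl]; linarith)
    have hmin : min p.1.2 (qof (dl p)).1.1 = 0 := by
      rw [qof_fst, hd1]; exact min_eq_right h2
    refine bsg_ext ?_ ?_
    · rw [mul_fst, hmin, qof_fst, hd1, hptf]; ring
    · rw [mul_snd, hmin, qof_snd, hd2, hpts]; simp only [dl]; ring

lemma nhds_bsg (p : Bsg) : 𝓝 p = Filter.comap indmap (@nhds _ Tw (indmap p)) :=
  @nhds_induced (ℝ × ℝ) Bsg Tw indmap p

lemma isOpen_dl_eq (c : ℝ) : IsOpen {p : Bsg | dl p = c} := by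
  have hopen : IsOpen[Tw] (({c} : Set ℝ) ×ˢ (univ : Set ℝ)) :=
    @IsOpen.prod ℝ ℝ ⊥ _ {c} univ (@isOpen_discrete ℝ ⊥ (discreteTopology_bot ℝ) {c}) isOpen_univ
  have hset : {p : Bsg | dl p = c} = indmap ⁻¹' (({c} : Set ℝ) ×ˢ (univ : Set ℝ)) := by
    ext p; simp [indmap, dl, eq_comm]
  rw [hset]
  exact @isOpen_induced Bsg (ℝ × ℝ) Tw indmap _ hopen

lemma contPt : Continuous pt := by
  have c1 : Continuous[_, ⊥] (fun _ : ℝ => (0 : ℝ)) := @continuous_const ℝ ℝ _ ⊥ 0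
  have c2 : Continuous (fun t : ℝ => max t 0) := continuous_id.max continuous_const
  have h : Continuous[_, Tw] (fun t : ℝ => ((0 : ℝ), max t 0)) :=
    @Continuous.prodMk ℝ ℝ ℝ ⊥ _ _ _ _ c1 c2
  have h2 : Continuous[_, Tw] (indmap ∘ pt) := by
    refine @Continuous.congr ℝ (ℝ × ℝ) _ Tw _ _ h fun t => ?_
    simp only [Function.comp, indmap, pt]
    exact Prod.ext (by simp) (by simp)
  exact continuous_induced_rng.mpr h2


lemma cross {X : Type*} [TopologicalSpace X] {s C : Set X} (hs : IsPreconnected s)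
    (h1 : (s ∩ interior C).Nonempty) (h2 : (s ∩ (closure C)ᶜ).Nonempty) :
    (s ∩ frontier C).Nonempty := by
  by_contra hemp
  rw [Set.not_nonempty_iff_eq_empty] at hemp
  have hsub : s ⊆ interior C ∪ (closure C)ᶜ := by
    intro y hy
    by_cases hyc : y ∈ closure C
    · left
      by_contra hyi
      have hyf : y ∈ frontier C := by
        rw [← closure_diff_interior]; exact ⟨hyc, hyi⟩
      exact (Set.eq_empty_iff_forall_notMem.1 hemp y) ⟨hy, hyf⟩
    · right; exact hyc
  obtain ⟨y, _, hyi, hyc⟩ := hs _ _ isOpen_interior isClosed_closure.isOpen_compl hsub h1 h2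
  exact hyc (interior_subset_closure hyi)

section Main

variable {S : Type*} [TopologicalSpace S] [T2Space S] [LocallyCompactSpace S] [Semigroup S]
  {f : Bsg → S} {I : Set S}

lemma limit_mem_I
    (hsep : ∀ a : S, Continuous (fun x : S => a * x) ∧ Continuous (fun x : S => x * a))
    (hinj : Function.Injective f)
    (hhom : ∀ u v : Bsg, f (u * v) = f u * f v)
    (hrange : Set.range f = Iᶜ)
    (𝒱 : Ultrafilter ℝ) (h1 : (𝒱 : Filter ℝ) ≤ atTop) {z : S}
    (hz : Tendsto (fun t => f (pt t)) 𝒱 (𝓝 z)) : z ∈ I := by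
  by_contra hzI
  have hzr : z ∈ Set.range f := by rw [hrange]; exact hzI
  obtain ⟨w, rfl⟩ := hzr
  set x := w.1.1 + 1 with hxdef
  have hw0 := w.2.1
  have hx0 : 0 ≤ x := by simp only [hxdef]; linarith
  have hev : (fun t => f (pt x) * f (pt t)) =ᶠ[(𝒱 : Filter ℝ)] (fun t => f (pt t)) := by
    have hge : ∀ᶠ t in (𝒱 : Filter ℝ), x ≤ t := h1 (eventually_ge_atTop x)
    exact hge.mono fun t ht => by
      dsimp only
      rw [← hhom]
      congr 1
      apply pt_mul_of_le
      rw [pt_fst, max_eq_left hx0]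
      exact le_trans ht (le_max_left t 0)
  have h2 : Tendsto (fun t => f (pt x) * f (pt t)) 𝒱 (𝓝 (f (pt x) * f w)) :=
    ((hsep (f (pt x))).1.tendsto _).comp hz
  have heq : f (pt x) * f w = f w := tendsto_nhds_unique (Filter.Tendsto.congr' hev h2) hz
  rw [← hhom] at heq
  have hww := hinj heq
  have hcontr := congrArg (fun r : Bsg => r.1.1) hww
  rw [pt_mul_fst_of_ge (by rw [max_eq_left hx0]; linarith), max_eq_left hx0] at hcontr
  simp only [hxdef] at hcontr; linarith

lemma tail_trap
    (hsep : ∀ a : S, Continuous (fun x : S => a * x) ∧ Continuous (fun x : S => x * a))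
    (hinj : Function.Injective f)
    (hhom : ∀ u v : Bsg, f (u * v) = f u * f v)
    (hrange : Set.range f = Iᶜ)
    (hIcomp : IsCompact I)
    (hcont : Continuous (fun t : ℝ => f (pt t)))
    {K : Set S} (hK : IsCompact K)
    (hfreq : ∀ T : ℝ, ∃ t, T ≤ t ∧ f (pt t) ∈ K) :
    ∃ C' : Set S, IsCompact C' ∧ ∃ T : ℝ, ∀ t, T ≤ t → f (pt t) ∈ C' := by
  obtain ⟨C', hC', hsub⟩ := exists_compact_superset (hK.union hIcomp)
  refine ⟨C', hC', ?_⟩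
  by_contra hno
  push_neg at hno
  have hcross : ∀ T : ℝ, ∃ τ, T ≤ τ ∧ f (pt τ) ∈ frontier C' := by
    intro T
    obtain ⟨t₁, ht₁, ht₁K⟩ := hfreq T
    obtain ⟨t₂, ht₂, ht₂n⟩ := hno t₁
    have hconn : IsPreconnected ((fun t => f (pt t)) '' Set.Icc t₁ t₂) :=
      isPreconnected_Icc.image _ hcont.continuousOn
    have h1 : (((fun t => f (pt t)) '' Set.Icc t₁ t₂) ∩ interior C').Nonempty := by
      refine ⟨f (pt t₁), ⟨t₁, ⟨le_refl _, ht₂⟩, rfl⟩, hsub (Or.inl ht₁K)⟩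
    have h2 : (((fun t => f (pt t)) '' Set.Icc t₁ t₂) ∩ (closure C')ᶜ).Nonempty := by
      refine ⟨f (pt t₂), ⟨t₂, ⟨ht₂, le_refl _⟩, rfl⟩, ?_⟩
      rw [hC'.isClosed.closure_eq]; exact ht₂n
    obtain ⟨y, ⟨τ, hτmem, rfl⟩, hyfr⟩ := cross hconn h1 h2
    exact ⟨τ, le_trans ht₁ hτmem.1, hyfr⟩
  have hNB : Filter.NeBot ((atTop : Filter ℝ) ⊓ 𝓟 {t : ℝ | f (pt t) ∈ frontier C'}) := by
    rw [Filter.inf_principal_neBot_iff]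
    intro U hU
    obtain ⟨T, hT⟩ := Filter.mem_atTop_sets.1 hU
    obtain ⟨τ, hτ1, hτ2⟩ := hcross T
    exact ⟨τ, hT τ hτ1, hτ2⟩
  set 𝒱 : Ultrafilter ℝ := @Ultrafilter.of _ _ hNB with h𝒱def
  have h𝒱 : (𝒱 : Filter ℝ) ≤ (atTop : Filter ℝ) ⊓ 𝓟 {t : ℝ | f (pt t) ∈ frontier C'} :=
    Ultrafilter.of_le _
  have hfr_cpt : IsCompact (frontier C') :=
    hC'.of_isClosed_subset (isClosed_frontier : IsClosed (frontier C'))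
      ((frontier_subset_closure (s := C')).trans hC'.isClosed.closure_eq.subset)
  have hle : ↑(𝒱.map (fun t => f (pt t))) ≤ 𝓟 (frontier C') := by
    rw [Ultrafilter.coe_map, Filter.le_principal_iff, Filter.mem_map]
    exact h𝒱 (Filter.mem_inf_of_right (Filter.mem_principal_self _))
  obtain ⟨z, hzfr, hztend⟩ := hfr_cpt.ultrafilter_le_nhds _ hle
  rw [Ultrafilter.coe_map] at hztend
  have hzI : z ∈ I :=
    limit_mem_I hsep hinj hhom hrange 𝒱 (le_trans h𝒱 inf_le_left) hztend
  have hzint : z ∈ interior C' := hsub (Or.inr hzI)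
  rw [← closure_diff_interior] at hzfr
  exact hzfr.2 hzint

lemma freq_trap
    (hsep : ∀ a : S, Continuous (fun x : S => a * x) ∧ Continuous (fun x : S => x * a))
    (hinj : Function.Injective f)
    (hhom : ∀ u v : Bsg, f (u * v) = f u * f v)
    (hrange : Set.range f = Iᶜ)
    (hIcomp : IsCompact I)
    (hemb : Topology.IsEmbedding f)
    (hcont : Continuous (fun t : ℝ => f (pt t)))
    (hInotopen : ¬ IsOpen I) :
    ∃ K : Set S, IsCompact K ∧ ∀ T : ℝ, ∃ t, T ≤ t ∧ f (pt t) ∈ K := by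
  classical
  -- a point of `I` in the closure of the complement
  have ha : ∃ a ∈ I, a ∈ closure Iᶜ := by
    by_contra h
    push_neg at h
    apply hInotopen
    have hsub : I ⊆ interior I := by
      intro a haI
      have h2 := h a haI
      rw [closure_compl] at h2
      simpa using h2
    have : interior I = I := Set.Subset.antisymm interior_subset hsub
    rw [← this]; exact isOpen_interior
  obtain ⟨a, haI, hacl⟩ := ha
  have hNB0 : (𝓝 a ⊓ 𝓟 Iᶜ).NeBot := mem_closure_iff_clusterPt.1 hacl
  have hNBc : (Filter.comap f (𝓝 a ⊓ 𝓟 Iᶜ)).NeBot := by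
    apply Filter.comap_neBot
    intro t ht
    have h2 : t ∩ Iᶜ ∈ 𝓝 a ⊓ 𝓟 Iᶜ :=
      Filter.inter_mem ht (Filter.mem_inf_of_right (Filter.mem_principal_self _))
    obtain ⟨x, hxt, hxc⟩ := Filter.nonempty_of_mem h2
    have : x ∈ Set.range f := by rw [hrange]; exact hxc
    obtain ⟨p, rfl⟩ := this
    exact ⟨p, hxt⟩
  set 𝒰 : Ultrafilter Bsg := @Ultrafilter.of _ _ hNBc with h𝒰def
  have htend : Tendsto f 𝒰 (𝓝 a) := by
    calc Filter.map f ↑𝒰 ≤ Filter.map f (Filter.comap f (𝓝 a ⊓ 𝓟 Iᶜ)) :=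
          Filter.map_mono (Ultrafilter.of_le _)
      _ ≤ 𝓝 a ⊓ 𝓟 Iᶜ := Filter.map_comap_le
      _ ≤ 𝓝 a := inf_le_left
  obtain ⟨C, hC, hICint⟩ := exists_compact_superset hIcomp
  have hDmem : {p : Bsg | f p ∈ interior C} ∈ 𝒰 := htend (isOpen_interior.mem_nhds (hICint haI))
  by_cases hatom : ∃ β : ℝ, {p : Bsg | dl p = β} ∈ 𝒰
  · -- atomic case
    obtain ⟨β, hβ⟩ := hatom
    by_cases hbd : ∃ n : ℝ, {p : Bsg | p.1.1 ≤ n} ∈ 𝒰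
    · exfalso
      obtain ⟨n, hn⟩ := hbd
      have hle : ↑(𝒰.map (fun p : Bsg => p.1.1)) ≤ 𝓟 (Set.Icc 0 n) := by
        rw [Ultrafilter.coe_map, Filter.le_principal_iff, Filter.mem_map]
        filter_upwards [hn] with p hp
        exact ⟨p.2.1, hp⟩
      obtain ⟨u₀, hu₀mem, hu₀tend⟩ := isCompact_Icc.ultrafilter_le_nhds _ hle
      rw [Ultrafilter.coe_map] at hu₀tend
      have hu₀tend' : Tendsto (fun p : Bsg => p.1.1) 𝒰 (𝓝 u₀) := hu₀tend
      have hvtend : Tendsto (fun p : Bsg => p.1.2) 𝒰 (𝓝 (u₀ + β)) := by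
        refine Filter.Tendsto.congr' ?_ (hu₀tend'.add tendsto_const_nhds)
        filter_upwards [hβ] with p hp
        simp only [dl] at hp; linarith
      have hvβ : 0 ≤ u₀ + β := ge_of_tendsto hvtend (Filter.Eventually.of_forall fun p => p.2.2)
      set w₀ : Bsg := ⟨(u₀, u₀ + β), hu₀mem.1, hvβ⟩ with hw₀
      have hdlw : dl w₀ = β := by simp only [hw₀, dl]; ring
      have hindt : Tendsto (fun p : Bsg => indmap p) 𝒰 (@nhds _ Tw (indmap w₀)) := by
        have hfst : Tendsto (fun p : Bsg => dl p) 𝒰 (@nhds ℝ ⊥ (dl w₀)) := by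
          refine Filter.Tendsto.mono_right ?_ (@pure_le_nhds ℝ ⊥ (dl w₀))
          rw [Filter.tendsto_pure]
          filter_upwards [hβ] with p hp
          rw [hp, hdlw]
        have hsnd : Tendsto (fun p : Bsg => min p.1.1 p.1.2) 𝒰
            (𝓝 (min w₀.1.1 w₀.1.2)) := hu₀tend'.min hvtend
        exact (hfst.prodMk hsnd).mono_right
          (le_of_eq (@nhds_prod_eq ℝ ℝ ⊥ _ (dl w₀) (min w₀.1.1 w₀.1.2)).symm)
      have hidt : Tendsto (fun p : Bsg => p) 𝒰 (𝓝 w₀) := by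
        rw [nhds_bsg, Filter.tendsto_comap_iff]
        exact hindt
      have hfwt : Tendsto f 𝒰 (𝓝 (f w₀)) := (hemb.continuous.tendsto w₀).comp hidt
      have haw : a = f w₀ := tendsto_nhds_unique htend hfwt
      have : a ∈ Iᶜ := by rw [← hrange, haw]; exact Set.mem_range_self _
      exact this haI
    · push_neg at hbd
      refine ⟨(fun x => x * f (qof β)) '' C, hC.image (hsep (f (qof β))).2, ?_⟩
      intro T
      have hTmem : ({p : Bsg | p.1.1 ≤ max T 0} : Set Bsg)ᶜ ∈ 𝒰 :=
        (Ultrafilter.compl_mem_iff_notMem).2 (hbd (max T 0))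
      have hmem : ({p : Bsg | f p ∈ interior C} ∩ ({p : Bsg | dl p = β} ∩
          ({p : Bsg | p.1.1 ≤ max T 0} : Set Bsg)ᶜ)) ∈ 𝒰 :=
        Filter.inter_mem hDmem (Filter.inter_mem hβ hTmem)
      obtain ⟨p, hp1, hp2, hp3⟩ := Filter.nonempty_of_mem hmem
      have hp3' : max T 0 < p.1.1 := not_le.1 hp3
      refine ⟨p.1.1, le_of_lt (lt_of_le_of_lt (le_max_left T 0) hp3'), ?_⟩
      have hq : p * qof β = pt p.1.1 := by
        have h5 := mul_qof p; rw [hp2] at h5; exact h5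
      rw [← hq, hhom]
      exact ⟨f p, interior_subset hp1, rfl⟩
  · -- non-atomic case
    push_neg at hatom
    by_contra hno
    push_neg at hno
    have hesc : ∀ p : Bsg, ∃ y, 0 ≤ y ∧ f (p * pt y) ∉ C := by
      intro p
      by_contra hall
      push_neg at hall
      obtain ⟨T, hT⟩ := hno ((fun x => x * f (qof (dl p))) '' C)
        (hC.image (hsep (f (qof (dl p)))).2)
      set t := max T (max p.1.1 0) with ht
      have h1 : p.1.1 ≤ t := le_trans (le_max_left _ _) (le_max_right _ _)
      have h0 : 0 ≤ t := le_trans (le_max_right _ _) (le_max_right _ _)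
      set y := t + p.1.2 - p.1.1 with hy
      have hpy : p.1.2 ≤ y := by simp only [hy]; linarith
      have hy0 : 0 ≤ y := le_trans p.2.2 hpy
      have hy2 : p.1.2 ≤ max y 0 := le_trans hpy (le_max_left _ _)
      have hfst : (p * pt y).1.1 = t := by
        rw [mul_pt_fst_of_ge hy2, max_eq_left hy0]; simp only [hy]; ring
      have hdl : dl (p * pt y) = dl p := dl_mul_pt p y
      have hq : (p * pt y) * qof (dl p) = pt t := by
        have h5 := mul_qof (p * pt y); rw [hdl, hfst] at h5; exact h5
      have hEt : f (pt t) = f (p * pt y) * f (qof (dl p)) := by rw [← hhom, hq]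
      exact hT t (le_max_left _ _) ⟨f (p * pt y), hall y hy0, hEt.symm⟩
    have hRex : ∀ p : Bsg, f p ∈ interior C → ∃ y, 0 ≤ y ∧ f (p * pt y) ∈ frontier C := by
      intro p hp
      obtain ⟨y₁, hy₁0, hy₁⟩ := hesc p
      have hconn : IsPreconnected ((fun y => f (p * pt y)) '' Set.Icc 0 y₁) := by
        apply isPreconnected_Icc.image
        have heq : (fun y : ℝ => f (p * pt y)) = fun y => f p * f (pt y) := by
          funext y; rw [← hhom]
        rw [heq]
        exact ((hsep (f p)).1.comp hcont).continuousOn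
      have h1 : (((fun y => f (p * pt y)) '' Set.Icc 0 y₁) ∩ interior C).Nonempty := by
        refine ⟨f (p * pt 0), ⟨0, ⟨le_refl 0, hy₁0⟩, rfl⟩, ?_⟩
        rw [mul_pt_of_le (by simpa using p.2.2)]
        exact hp
      have h2 : (((fun y => f (p * pt y)) '' Set.Icc 0 y₁) ∩ (closure C)ᶜ).Nonempty := by
        refine ⟨f (p * pt y₁), ⟨y₁, ⟨hy₁0, le_refl _⟩, rfl⟩, ?_⟩
        rw [hC.isClosed.closure_eq]; exact hy₁
      obtain ⟨y, ⟨y₀, hy₀mem, rfl⟩, hyfr⟩ := cross hconn h1 h2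
      exact ⟨y₀, hy₀mem.1, hyfr⟩
    set R : Bsg → Bsg := fun p =>
      if h : ∃ y, 0 ≤ y ∧ f (p * pt y) ∈ frontier C then p * pt h.choose else p with hR
    have hRfr : ∀ p : Bsg, f p ∈ interior C → f (R p) ∈ frontier C := by
      intro p hp
      have hex := hRex p hp
      simp only [hR, dif_pos hex]
      exact hex.choose_spec.2
    have hRdl : ∀ p : Bsg, dl (R p) = dl p := by
      intro p
      simp only [hR]
      split
      · exact dl_mul_pt _ _
      · rfl
    have hfr_cpt : IsCompact (frontier C) :=
      hC.of_isClosed_subset (isClosed_frontier : IsClosed (frontier C))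
        ((frontier_subset_closure (s := C)).trans hC.isClosed.closure_eq.subset)
    have hle : ↑(𝒰.map (fun p => f (R p))) ≤ 𝓟 (frontier C) := by
      rw [Ultrafilter.coe_map, Filter.le_principal_iff, Filter.mem_map]
      filter_upwards [hDmem] with p hp
      exact hRfr p hp
    obtain ⟨z, hzfr, hztend⟩ := hfr_cpt.ultrafilter_le_nhds _ hle
    rw [Ultrafilter.coe_map] at hztend
    have hzI : z ∉ I := by
      intro hzIn
      have : z ∈ interior C := hICint hzIn
      rw [← closure_diff_interior] at hzfr; exact hzfr.2 this
    have hzr : z ∈ Set.range f := by rw [hrange]; exact hzI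
    obtain ⟨w, rfl⟩ := hzr
    have hRt : Tendsto R 𝒰 (𝓝 w) := by
      rw [hemb.tendsto_nhds_iff]
      exact hztend
    have hwmem : {p : Bsg | dl p = dl w} ∈ 𝓝 w := (isOpen_dl_eq (dl w)).mem_nhds rfl
    have hmem2 : {p : Bsg | dl (R p) = dl w} ∈ 𝒰 := hRt hwmem
    have hmem3 : {p : Bsg | dl p = dl w} ∈ 𝒰 := by
      filter_upwards [hmem2] with p hp
      rw [← hRdl p]; exact hp
    exact hatom (dl w) hmem3

lemma pt_mul_q0α {α : ℝ} (hα : 0 ≤ α) {t : ℝ} (ht : 0 ≤ t) :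
    pt t * (⟨(0, α), le_refl 0, hα⟩ : Bsg) = ⟨(t, t + α), ht, by simpa using add_nonneg ht hα⟩ := by
  refine bsg_ext ?_ ?_
  · show (pt t).1.1 + 0 - min (pt t).1.2 0 = t
    rw [pt_fst, pt_snd, max_eq_left ht, min_eq_right ht]; ring
  · show (pt t).1.2 + α - min (pt t).1.2 0 = t + α
    rw [pt_snd, max_eq_left ht, min_eq_right ht]; ring

lemma pt_mul_qα0 {α : ℝ} (hα : 0 ≤ α) {t : ℝ} (ht : α ≤ t) :
    pt t * (⟨(α, 0), hα, le_refl 0⟩ : Bsg) = ⟨(t, t - α), le_trans hα ht, by simpa using sub_nonneg.2 ht⟩ := by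
  have ht0 : 0 ≤ t := le_trans hα ht
  refine bsg_ext ?_ ?_
  · show (pt t).1.1 + α - min (pt t).1.2 α = t
    rw [pt_fst, pt_snd, max_eq_left ht0, min_eq_right ht]; ring
  · show (pt t).1.2 + 0 - min (pt t).1.2 α = t - α
    rw [pt_snd, max_eq_left ht0, min_eq_right ht]; ring

lemma pt_mul_qα0' {α : ℝ} (hα : 0 ≤ α) {t : ℝ} (ht0 : 0 ≤ t) (ht : t ≤ α) :
    pt t * (⟨(α, 0), hα, le_refl 0⟩ : Bsg) = ⟨(α, 0), hα, le_refl 0⟩ := by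
  refine bsg_ext ?_ ?_
  · show (pt t).1.1 + α - min (pt t).1.2 α = α
    rw [pt_fst, pt_snd, max_eq_left ht0, min_eq_left ht]; ring
  · show (pt t).1.2 + 0 - min (pt t).1.2 α = 0
    rw [pt_snd, max_eq_left ht0, min_eq_left ht]; ring

lemma diag_eq_pt {p : Bsg} (hp : p ∈ Bsg.Lplus 0) : p = pt p.1.1 := by
  have h : p.1.2 = p.1.1 := by simpa [Bsg.Lplus] using hp
  exact bsg_ext (by rw [pt_fst, max_eq_left p.2.1])
    (by rw [pt_snd, max_eq_left p.2.1]; exact h)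

lemma main_assembly
    (hsep : ∀ a : S, Continuous (fun x : S => a * x) ∧ Continuous (fun x : S => x * a))
    (hIcomp : IsCompact I)
    (hIdeal : ∀ s : S, ∀ a ∈ I, s * a ∈ I ∧ a * s ∈ I)
    (hinj : Function.Injective f)
    (hhom : ∀ u v : Bsg, f (u * v) = f u * f v)
    (hrange : Set.range f = Iᶜ)
    (hemb : Topology.IsEmbedding f)
    (hInotopen : ¬ IsOpen I) :
    ∀ α : ℝ, 0 ≤ α → IsCompact (f '' Bsg.Lplus α ∪ I) ∧ IsCompact (f '' Bsg.Lminus α ∪ I) := by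
  intro α hα
  have hcont : Continuous (fun t : ℝ => f (pt t)) := hemb.continuous.comp contPt
  obtain ⟨K, hK, hfreq⟩ := freq_trap hsep hinj hhom hrange hIcomp hemb hcont hInotopen
  obtain ⟨C', hC', T, htail⟩ := tail_trap hsep hinj hhom hrange hIcomp hcont hK hfreq
  have hseg : IsCompact ((fun t : ℝ => f (pt t)) '' Set.Icc 0 T) := isCompact_Icc.image hcont
  have hK₀closed : IsClosed (f '' Bsg.Lplus 0 ∪ I) := by
    rw [← isOpen_compl_iff, isOpen_iff_mem_nhds]
    intro s hs
    simp only [Set.mem_compl_iff, Set.mem_union, not_or] at hs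
    obtain ⟨hs1, hs2⟩ := hs
    have hsr : s ∈ Set.range f := by rw [hrange]; exact hs2
    obtain ⟨w, rfl⟩ := hsr
    have hw : w ∉ Bsg.Lplus 0 := fun hw => hs1 ⟨w, hw, rfl⟩
    have hdlw : dl w ≠ 0 := by
      intro h
      apply hw
      show w.1.2 = w.1.1 + 0
      simp only [dl] at h; linarith
    have hOemb : Topology.IsOpenEmbedding f :=
      ⟨hemb, by rw [hrange]; exact hIcomp.isClosed.isOpen_compl⟩
    have hopen : IsOpen (f '' {p : Bsg | dl p = dl w}) := hOemb.isOpenMap _ (isOpen_dl_eq (dl w))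
    apply Filter.mem_of_superset (hopen.mem_nhds ⟨w, rfl, rfl⟩)
    rintro x ⟨p, hp, rfl⟩
    simp only [Set.mem_compl_iff, Set.mem_union, not_or]
    constructor
    · rintro ⟨q, hq, hqe⟩
      have hqp := hinj hqe
      apply hdlw
      rw [← hp, ← hqp]
      show dl q = 0
      have h6 : q.1.2 = q.1.1 + 0 := hq
      simp only [dl]; linarith
    · intro hI
      have : f p ∈ Iᶜ := by rw [← hrange]; exact ⟨p, rfl⟩
      exact this hI
  have hsub : f '' Bsg.Lplus 0 ∪ I ⊆ (((fun t : ℝ => f (pt t)) '' Set.Icc 0 T) ∪ C') ∪ I := by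
    rintro x (⟨p, hp, rfl⟩ | hx)
    · have hp0 : p = pt p.1.1 := diag_eq_pt hp
      rcases le_total p.1.1 T with h | h
      · exact Or.inl (Or.inl ⟨p.1.1, ⟨p.2.1, h⟩, (congrArg f hp0).symm⟩)
      · exact Or.inl (Or.inr (by rw [hp0]; exact htail _ h))
    · exact Or.inr hx
  have hK₀ : IsCompact (f '' Bsg.Lplus 0 ∪ I) :=
    ((hseg.union hC').union hIcomp).of_isClosed_subset hK₀closed hsub
  constructor
  · -- plus ray
    have heq : f '' Bsg.Lplus α ∪ I =
        ((fun x => x * f (⟨(0, α), le_refl 0, hα⟩ : Bsg)) '' (f '' Bsg.Lplus 0 ∪ I)) ∪ I := by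
      apply Set.Subset.antisymm
      · rintro x (⟨p, hp, rfl⟩ | hx)
        · left
          refine ⟨f (pt p.1.1), Or.inl ⟨pt p.1.1, ?_, rfl⟩, ?_⟩
          · show (pt p.1.1).1.2 = (pt p.1.1).1.1 + 0
            rw [pt_fst, pt_snd]; ring
          · show f (pt p.1.1) * f (⟨(0, α), le_refl 0, hα⟩ : Bsg) = f p
            rw [← hhom]
            congr 1
            rw [pt_mul_q0α hα p.2.1]
            refine bsg_ext ?_ ?_
            · rfl
            · show p.1.1 + α = p.1.2
              have h7 : p.1.2 = p.1.1 + α := hp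
              linarith
        · exact Or.inr hx
      · rintro x (⟨y, hy, rfl⟩ | hx)
        · rcases hy with ⟨p, hp, rfl⟩ | hyI
          · left
            show f p * f (⟨(0, α), le_refl 0, hα⟩ : Bsg) ∈ f '' Bsg.Lplus α
            rw [← hhom]
            refine ⟨p * ⟨(0, α), le_refl 0, hα⟩, ?_, rfl⟩
            show (p * ⟨(0, α), le_refl 0, hα⟩).1.2 = (p * ⟨(0, α), le_refl 0, hα⟩).1.1 + α
            rw [diag_eq_pt hp, pt_mul_q0α hα p.2.1]
          · exact Or.inr (hIdeal (f _) _ hyI).2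
        · exact Or.inr hx
    rw [heq]
    exact (hK₀.image (hsep (f _)).2).union hIcomp
  · -- minus ray
    have heq : f '' Bsg.Lminus α ∪ I =
        ((fun x => x * f (⟨(α, 0), hα, le_refl 0⟩ : Bsg)) '' (f '' Bsg.Lplus 0 ∪ I)) ∪ I := by
      apply Set.Subset.antisymm
      · rintro x (⟨p, hp, rfl⟩ | hx)
        · left
          have hpa : α ≤ p.1.1 := by
            have h7 : p.1.1 = p.1.2 + α := hp
            have h8 := p.2.2; linarith
          refine ⟨f (pt p.1.1), Or.inl ⟨pt p.1.1, ?_, rfl⟩, ?_⟩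
          · show (pt p.1.1).1.2 = (pt p.1.1).1.1 + 0
            rw [pt_fst, pt_snd]; ring
          · show f (pt p.1.1) * f (⟨(α, 0), hα, le_refl 0⟩ : Bsg) = f p
            rw [← hhom]
            congr 1
            rw [pt_mul_qα0 hα hpa]
            refine bsg_ext ?_ ?_
            · rfl
            · show p.1.1 - α = p.1.2
              have h7 : p.1.1 = p.1.2 + α := hp
              linarith
        · exact Or.inr hx
      · rintro x (⟨y, hy, rfl⟩ | hx)
        · rcases hy with ⟨p, hp, rfl⟩ | hyI
          · left
            show f p * f (⟨(α, 0), hα, le_refl 0⟩ : Bsg) ∈ f '' Bsg.Lminus α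
            rw [← hhom]
            refine ⟨p * ⟨(α, 0), hα, le_refl 0⟩, ?_, rfl⟩
            show (p * ⟨(α, 0), hα, le_refl 0⟩).1.1 = (p * ⟨(α, 0), hα, le_refl 0⟩).1.2 + α
            rw [diag_eq_pt hp]
            rcases le_total α p.1.1 with h | h
            · rw [pt_mul_qα0 hα h]
              show p.1.1 = (p.1.1 - α) + α
              ring
            · rw [pt_mul_qα0' hα p.2.1 h]
              show α = 0 + α
              ring
          · exact Or.inr (hIdeal (f _) _ hyI).2
        · exact Or.inr hx
    rw [heq]
    exact (hK₀.image (hsep (f _)).2).union hIcomp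

end Main
end Stmt8Aux

open Bsg in
/-- if `I` is not open, then for every `α ≥ 0` the sets `f(L_α^+) ∪ I` and
`f(L_α^−) ∪ I` are compact. -/
theorem stmt8 {S : Type*} [TopologicalSpace S] [T2Space S] [LocallyCompactSpace S] [Semigroup S]
    (hsep : ∀ a : S, Continuous (fun x : S => a * x) ∧ Continuous (fun x : S => x * a))
    (I : Set S) (hne : I.Nonempty) (hIcomp : IsCompact I)
    (hIdeal : ∀ s : S, ∀ a ∈ I, s * a ∈ I ∧ a * s ∈ I)
    (f : Bsg → S) (hinj : Function.Injective f)
    (hhom : ∀ u v : Bsg, f (u * v) = f u * f v)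
    (hrange : Set.range f = Iᶜ)
    (hemb : Topology.IsEmbedding f)
    (hInotopen : ¬ IsOpen I) :
    ∀ α : ℝ, 0 ≤ α → IsCompact (f '' Lplus α ∪ I) ∧ IsCompact (f '' Lminus α ∪ I) := by
  exact Stmt8Aux.main_assembly hsep hIcomp hIdeal hinj hhom hrange hemb hInotopen
end

section
/- Let S be the semigroup B^2_{[0,∞)} with an adjoined compact ideal I. Then either I is an open subset of S, or S is compact. -/
namespace Bsg

lemma mul_def' (z w : Bsg) : z * w = bmul z w := rfl

/-- The "ray index" of a point. -/
noncomputable def D (z : Bsg) : ℝ := z.1.2 - z.1.1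

/-- The "min" parameter of a point. -/
noncomputable def mn (z : Bsg) : ℝ := min z.1.1 z.1.2

/-- Parametrization of the ray with index `δ`. -/
noncomputable def g (δ u : ℝ) : Bsg :=
  ⟨(max u 0 + max (-δ) 0, max u 0 + max δ 0), by
    constructor <;> · dsimp only; positivity⟩

lemma fst_nonneg (z : Bsg) : 0 ≤ z.1.1 := z.2.1
lemma snd_nonneg (z : Bsg) : 0 ≤ z.1.2 := z.2.2
lemma mn_nonneg (z : Bsg) : 0 ≤ mn z := le_min z.2.1 z.2.2

lemma D_g (δ u : ℝ) : D (g δ u) = δ := by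
  unfold D g; dsimp only
  rcases le_total 0 δ with h | h
  · rw [max_eq_left h, max_eq_right (by linarith : -δ ≤ 0)]; ring
  · rw [max_eq_right h, max_eq_left (by linarith : 0 ≤ -δ)]; ring

lemma mn_g (δ u : ℝ) : mn (g δ u) = max u 0 := by
  unfold mn g; dsimp only
  rcases le_total 0 δ with h | h
  · rw [max_eq_left h, max_eq_right (by linarith : -δ ≤ 0)]
    rw [min_eq_left (by linarith : max u 0 + 0 ≤ max u 0 + δ)]; ring
  · rw [max_eq_right h, max_eq_left (by linarith : 0 ≤ -δ)]
    rw [min_eq_right (by linarith : max u 0 + 0 ≤ max u 0 + -δ)]; ring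

lemma g_mn_D (z : Bsg) : g (D z) (mn z) = z := by
  apply Subtype.ext
  have h1 := z.2.1; have h2 := z.2.2
  unfold D mn g; dsimp only
  rcases le_total z.1.1 z.1.2 with h | h
  · rw [min_eq_left h, max_eq_left (by assumption),
      max_eq_left (by linarith : 0 ≤ z.1.2 - z.1.1),
      max_eq_right (by linarith : -(z.1.2 - z.1.1) ≤ 0)]
    exact Prod.ext (by ring) (by ring)
  · rw [min_eq_right h, max_eq_left (by assumption),
      max_eq_right (by linarith : z.1.2 - z.1.1 ≤ 0),
      max_eq_left (by linarith : 0 ≤ -(z.1.2 - z.1.1))]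
    exact Prod.ext (by ring) (by ring)

lemma g_zero (u : ℝ) (hu : 0 ≤ u) : (g 0 u).1 = (u, u) := by
  unfold g; dsimp only
  rw [max_eq_left hu, neg_zero, max_self]
  exact Prod.ext (by ring) (by ring)

/-- moving up a ray by right multiplication with an idempotent. -/
lemma ray_from_start (δ u : ℝ) (hu : 0 ≤ u) : g δ 0 * g 0 (u + max δ 0) = g δ u := by
  rw [mul_def']
  apply Subtype.ext
  rw [Prod.ext_iff]
  unfold bmul g
  dsimp only
  constructor <;> (simp only [min_def, max_def]; split_ifs <;> linarith)

set_option maxHeartbeats 2000000 in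
/-- collapsing a ray point to the idempotent ray by fixed sandwich multiplication. -/
lemma sandwich_to_e (δ u : ℝ) (hu : 0 ≤ u) :
    g (max (-δ) 0) 0 * g δ u * g (-max δ 0) 0 = g 0 u := by
  rw [mul_def', mul_def']
  apply Subtype.ext
  rw [Prod.ext_iff]
  unfold bmul g
  dsimp only
  constructor <;> (simp only [min_def, max_def]; split_ifs <;> linarith)

set_option maxHeartbeats 2000000 in
/-- shifting a point up the diagonal by fixed sandwich multiplication. -/
lemma shift_up (n : ℝ) (hn : 0 ≤ n) (z : Bsg) :
    g (-n) 0 * z * g n 0 =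
      ⟨(z.1.1 + n, z.1.2 + n),
        ⟨by have := z.2.1; dsimp only; linarith,
         by have := z.2.2; dsimp only; linarith⟩⟩ := by
  rw [mul_def', mul_def']
  apply Subtype.ext
  have h1 := z.2.1; have h2 := z.2.2
  rw [Prod.ext_iff]
  unfold bmul g
  dsimp only
  constructor <;> (simp only [min_def, max_def]; split_ifs <;> linarith)

lemma mn_shift (n : ℝ) (hn : 0 ≤ n) (z : Bsg) :
    mn (g (-n) 0 * z * g n 0) = mn z + n := by
  rw [shift_up n hn z]
  unfold mn; dsimp only
  rw [← min_add_add_right]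

end Bsg
namespace Bsg
open Topology

/-- The embedding map of `τ_L`. -/
noncomputable def phi (p : Bsg) : ℝ × ℝ := ((p.1.2 - p.1.1, min p.1.1 p.1.2) : ℝ × ℝ)

/-- The target topology of `τ_L`: discrete × euclidean. -/
def Tp : TopologicalSpace (ℝ × ℝ) := @instTopologicalSpaceProd ℝ ℝ ⊥ inferInstance

lemma phi_cont : @Continuous Bsg (ℝ × ℝ) _ Tp phi := continuous_induced_dom

lemma isOpen_preimage_phi {s : Set (ℝ × ℝ)} (hs : IsOpen[Tp] s) :
    IsOpen (phi ⁻¹' s) :=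
  @IsOpen.preimage Bsg (ℝ × ℝ) _ Tp phi phi_cont s hs

lemma isOpen_fstslab (δ : ℝ) (s : Set ℝ) (hs : IsOpen s) :
    IsOpen[Tp] {q : ℝ × ℝ | q.1 = δ ∧ q.2 ∈ s} := by
  have h1 : IsOpen[Tp] (Prod.fst ⁻¹' {δ}) :=
    @IsOpen.preimage (ℝ × ℝ) ℝ Tp ⊥ Prod.fst (@continuous_fst ℝ ℝ ⊥ inferInstance)
      {δ} (@isOpen_discrete ℝ ⊥ (discreteTopology_bot ℝ) {δ})
  have h2 : IsOpen[Tp] (Prod.snd ⁻¹' s) :=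
    @IsOpen.preimage (ℝ × ℝ) ℝ Tp inferInstance Prod.snd
      (@continuous_snd ℝ ℝ ⊥ inferInstance) s hs
  have h3 := @IsOpen.inter (ℝ × ℝ) Tp _ _ h1 h2
  have he : (Prod.fst ⁻¹' {δ} ∩ Prod.snd ⁻¹' s) = {q : ℝ × ℝ | q.1 = δ ∧ q.2 ∈ s} := rfl
  rwa [he] at h3

lemma isOpen_slab (δ a b : ℝ) :
    IsOpen {z : Bsg | D z = δ ∧ a < mn z ∧ mn z < b} := by
  have h := isOpen_preimage_phi (isOpen_fstslab δ (Set.Ioo a b) isOpen_Ioo)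
  have he : phi ⁻¹' {q : ℝ × ℝ | q.1 = δ ∧ q.2 ∈ Set.Ioo a b} =
      {z : Bsg | D z = δ ∧ a < mn z ∧ mn z < b} := rfl
  rwa [he] at h

lemma isOpen_ray (δ : ℝ) : IsOpen {z : Bsg | D z = δ} := by
  have h := isOpen_preimage_phi (isOpen_fstslab δ Set.univ isOpen_univ)
  have he : phi ⁻¹' {q : ℝ × ℝ | q.1 = δ ∧ q.2 ∈ Set.univ} =
      {z : Bsg | D z = δ} := by
    ext z; simp [phi, D]
  rwa [he] at h

lemma continuous_g (δ : ℝ) : Continuous (g δ) := by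
  have h : @Continuous ℝ (ℝ × ℝ) _ Tp (phi ∘ g δ) := by
    have he : phi ∘ g δ = (fun x : ℝ => ((δ, x) : ℝ × ℝ)) ∘ (fun u : ℝ => max u 0) := by
      funext u
      exact Prod.ext (D_g δ u) (mn_g δ u)
    rw [he]
    exact @Continuous.comp ℝ ℝ (ℝ × ℝ) _ _ Tp (fun u : ℝ => max u 0)
      (fun x : ℝ => ((δ, x) : ℝ × ℝ))
      (@Continuous.prodMk_right ℝ ℝ ⊥ inferInstance δ) (continuous_id.max continuous_const)
  exact continuous_induced_rng.mpr h

lemma continuous_mn : Continuous mn := by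
  have h := @Continuous.comp Bsg (ℝ × ℝ) ℝ _ Tp _ phi Prod.snd
    (@continuous_snd ℝ ℝ ⊥ inferInstance) phi_cont
  exact h

lemma isCompact_seg (δ M : ℝ) : IsCompact (g δ '' Set.Icc 0 M) :=
  isCompact_Icc.image (continuous_g δ)

lemma rays_finite {K : Set Bsg} (hK : IsCompact K) : (D '' K).Finite := by
  obtain ⟨t, ht⟩ := hK.elim_finite_subcover (fun δ : ℝ => {z : Bsg | D z = δ})
    (fun δ => isOpen_ray δ) (fun z _ => Set.mem_iUnion.2 ⟨D z, rfl⟩)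
  have h : D '' K ⊆ ↑t := by
    rintro - ⟨z, hz, rfl⟩
    obtain ⟨δ, hδ, hzδ⟩ := Set.mem_iUnion₂.1 (ht hz)
    exact hzδ ▸ hδ
  exact t.finite_toSet.subset h

lemma mn_bdd {K : Set Bsg} (hK : IsCompact K) : ∃ M : ℝ, ∀ z ∈ K, mn z ≤ M := by
  rcases K.eq_empty_or_nonempty with h | h
  · exact ⟨0, by simp [h]⟩
  obtain ⟨M, hM⟩ := (hK.image continuous_mn).bddAbove
  exact ⟨M, fun z hz => hM (Set.mem_image_of_mem mn hz)⟩

lemma exists_compact_nhds (p : Bsg) :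
    ∃ K : Set Bsg, IsCompact K ∧ K ∈ nhds p := by
  refine ⟨g (D p) '' Set.Icc 0 (mn p + 1), isCompact_seg _ _, ?_⟩
  apply Filter.mem_of_superset
    ((isOpen_slab (D p) (mn p - 1) (mn p + 1)).mem_nhds
      ⟨rfl, by linarith, by linarith⟩)
  rintro z ⟨h1, _, h3⟩
  exact ⟨mn z, ⟨mn_nonneg z, le_of_lt h3⟩, by rw [← h1]; exact g_mn_D z⟩

lemma le_cocompact_of_mn {l : Filter Bsg}
    (h : ∀ M : ℝ, {z : Bsg | M < mn z} ∈ l) : l ≤ Filter.cocompact Bsg := by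
  refine (Filter.hasBasis_cocompact.ge_iff).2 fun K hK => ?_
  obtain ⟨M, hM⟩ := mn_bdd hK
  exact Filter.mem_of_superset (h M) fun z hz hzK => absurd (hM z hzK) (not_le.2 hz)

lemma tendsto_cocompact_of_rays (y : ℕ → Bsg)
    (hinj : Function.Injective fun k => D (y k)) :
    Filter.Tendsto y Filter.cofinite (Filter.cocompact Bsg) := by
  refine (Filter.hasBasis_cocompact.tendsto_right_iff).2 fun K hK => ?_
  have h : {k : ℕ | y k ∈ K}.Finite := by
    have hsub : {k : ℕ | y k ∈ K} ⊆ (fun k => D (y k)) ⁻¹' (D '' K) :=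
      fun k hk => ⟨y k, hk, rfl⟩
    exact ((rays_finite hK).preimage hinj.injOn).subset hsub
  exact Filter.eventually_cofinite.2 (by simpa using h)

end Bsg
open Bsg Topology Filter

/-- either `I` is open in `S` or `S` is compact. -/
theorem stmt9 {S : Type*} [TopologicalSpace S] [T2Space S] [LocallyCompactSpace S] [Semigroup S]
    (hsep : ∀ a : S, Continuous (fun x : S => a * x) ∧ Continuous (fun x : S => x * a))
    (I : Set S) (hne : I.Nonempty) (hIcomp : IsCompact I)
    (hIdeal : ∀ s : S, ∀ a ∈ I, s * a ∈ I ∧ a * s ∈ I)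
    (f : Bsg → S) (hinj : Function.Injective f)
    (hhom : ∀ u v : Bsg, f (u * v) = f u * f v)
    (hrange : Set.range f = Iᶜ)
    (hemb : Topology.IsEmbedding f) :
    IsOpen I ∨ CompactSpace S := by
  by_cases hI : IsOpen I
  · exact Or.inl hI
  right
  have fcont : Continuous f := hemb.continuous
  have hmem : ∀ b : S, b ∉ I → ∃ p : Bsg, f p = b := by
    intro b hb
    have h : b ∈ Iᶜ := hb
    rw [← hrange] at h
    exact h
  -- Lemma E : escaping filters with convergent image must converge into the ideal.
  have hE : ∀ l : Filter Bsg, l.NeBot → l ≤ Filter.cocompact Bsg →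
      ∀ b : S, Filter.Tendsto f l (nhds b) → b ∈ I := by
    intro l hl hco b hb
    by_contra hbI
    obtain ⟨p, rfl⟩ := hmem b hbI
    have h1 : l ≤ nhds p := by
      rw [hemb.toIsInducing.nhds_eq_comap p]
      exact Filter.map_le_iff_le_comap.1 hb
    obtain ⟨K, hKc, hKn⟩ := exists_compact_nhds p
    have hK : K ∈ l := h1 hKn
    have hK' : Kᶜ ∈ l := hco hKc.compl_mem_cocompact
    have : (K ∩ Kᶜ : Set Bsg).Nonempty := Filter.nonempty_of_mem (Filter.inter_mem hK hK')
    simp at this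
  -- capture lemma
  have hcap : ∀ y : ℕ → Bsg,
      (↑((Filter.hyperfilter ℕ).map y) ≤ Filter.cocompact Bsg) →
      ∀ P : Set S, IsCompact P → (∀ w ∈ P, w ∉ I) → (∀ k, f (y k) ∈ P) → False := by
    intro y hyco P hPc hPI hyP
    set V := (Filter.hyperfilter ℕ).map y with hV
    have h2 : ↑(V.map f) ≤ Filter.principal P := by
      refine Filter.le_principal_iff.2 ?_
      have : {k : ℕ | f (y k) ∈ P} ∈ Filter.hyperfilter ℕ :=
        Filter.univ_mem' hyP
      exact this
    obtain ⟨b, hbP, hb⟩ := hPc.ultrafilter_le_nhds (V.map f) h2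
    refine hPI b hbP (hE ↑V V.neBot hyco b ?_)
    rw [Filter.Tendsto, ← Ultrafilter.coe_map]
    exact hb
  -- cocompactness criteria for sequences
  have hco_rays : ∀ y : ℕ → Bsg, (Function.Injective fun k => D (y k)) →
      ↑((Filter.hyperfilter ℕ).map y) ≤ Filter.cocompact Bsg := by
    intro y hinjD
    calc ↑((Filter.hyperfilter ℕ).map y) = Filter.map y ↑(Filter.hyperfilter ℕ) :=
          Ultrafilter.coe_map y _
    _ ≤ Filter.map y Filter.cofinite := Filter.map_mono Filter.hyperfilter_le_cofinite
    _ ≤ Filter.cocompact Bsg := tendsto_cocompact_of_rays y hinjD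
  have hco_mn : ∀ y : ℕ → Bsg, (∀ k : ℕ, (k : ℝ) ≤ mn (y k)) →
      ↑((Filter.hyperfilter ℕ).map y) ≤ Filter.cocompact Bsg := by
    intro y hymn
    have h : Filter.map y Filter.cofinite ≤ Filter.cocompact Bsg := by
      apply le_cocompact_of_mn
      intro M
      rw [Filter.mem_map]
      apply Filter.eventually_cofinite.2
      have hsub : {k : ℕ | ¬ y k ∈ {z : Bsg | M < mn z}} ⊆ {k : ℕ | (k : ℝ) ≤ M} := by
        intro k hk
        simp only [Set.mem_setOf_eq, not_lt] at hk ⊢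
        exact le_trans (hymn k) hk
      refine Set.Finite.subset ?_ hsub
      have : {k : ℕ | (k : ℝ) ≤ M} ⊆ Set.Iio (⌈max M 0⌉₊ + 1) := by
        intro k hk
        simp only [Set.mem_setOf_eq] at hk
        simp only [Set.mem_Iio]
        have h1 : (k : ℝ) ≤ max M 0 := le_trans hk (le_max_left M 0)
        have h2 : (k : ℝ) ≤ (⌈max M 0⌉₊ : ℝ) := le_trans h1 (Nat.le_ceil _)
        exact Nat.lt_succ_of_le (Nat.cast_le.1 h2)
      exact (Set.finite_Iio _).subset this
    calc ↑((Filter.hyperfilter ℕ).map y) = Filter.map y ↑(Filter.hyperfilter ℕ) :=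
          Ultrafilter.coe_map y _
    _ ≤ Filter.map y Filter.cofinite := Filter.map_mono Filter.hyperfilter_le_cofinite
    _ ≤ Filter.cocompact Bsg := h
  haveI : Nonempty Bsg := ⟨g 0 0⟩
  -- ambient compact container
  obtain ⟨K₀, hK₀c, hIK₀, -⟩ := exists_compact_between hIcomp isOpen_univ (Set.subset_univ I)
  -- a boundary point of the ideal
  have ha₀ : ∃ a₀ ∈ I, a₀ ∈ closure (Set.range f) := by
    have h1 : ¬ I ⊆ interior I := fun h => hI (by
      have : I = interior I := le_antisymm h interior_subset
      rw [this]; exact isOpen_interior)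
    obtain ⟨a₀, ha₀I, ha₀n⟩ := Set.not_subset.1 h1
    refine ⟨a₀, ha₀I, ?_⟩
    rw [hrange]
    rw [mem_closure_iff]
    intro O hO haO
    by_contra hcon
    rw [Set.not_nonempty_iff_eq_empty] at hcon
    have hOI : O ⊆ I := by
      intro w hw
      by_contra hwI
      exact Set.eq_empty_iff_forall_notMem.1 hcon w ⟨hw, hwI⟩
    exact ha₀n (mem_interior.2 ⟨O, hOI, hO, haO⟩)
  obtain ⟨a₀, ha₀I, ha₀cl⟩ := ha₀
  -- construction of the diagonal escaping ultrafilter 𝒰 with f-limit a ∈ I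
  set R : ℕ → Set Bsg := fun n => {z : Bsg | (n : ℝ) ≤ mn z ∧ f z ∈ K₀} with hR
  have hRne : ∀ n : ℕ, (R n).Nonempty := by
    intro n
    set q₁ : Bsg := g (-(n : ℝ)) 0
    set q₂ : Bsg := g (n : ℝ) 0
    have hΦc : Continuous fun w : S => (f q₁ * w) * f q₂ :=
      ((hsep (f q₂)).2).comp ((hsep (f q₁)).1)
    have han : (f q₁ * a₀) * f q₂ ∈ I := (hIdeal (f q₂) _ ((hIdeal (f q₁) a₀ ha₀I).1)).2
    have hO : IsOpen ((fun w : S => (f q₁ * w) * f q₂) ⁻¹' interior K₀) :=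
      isOpen_interior.preimage hΦc
    have haO : a₀ ∈ (fun w : S => (f q₁ * w) * f q₂) ⁻¹' interior K₀ := hIK₀ han
    obtain ⟨w, hwO, x, rfl⟩ := mem_closure_iff.1 ha₀cl _ hO haO
    refine ⟨(q₁ * x) * q₂, ?_, ?_⟩
    · have h1 : mn ((q₁ * x) * q₂) = mn x + (n : ℝ) := mn_shift (n : ℝ) (Nat.cast_nonneg n) x
      have h2 := mn_nonneg x
      rw [h1]; linarith
    · have h1 : f ((q₁ * x) * q₂) = (f q₁ * f x) * f q₂ := by rw [hhom, hhom]
      rw [h1]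
      exact interior_subset hwO
  have hRdir : Directed (· ≥ ·) fun n : ℕ => Filter.principal (R n) := by
    intro m n
    refine ⟨max m n, ?_, ?_⟩ <;>
    · apply Filter.principal_mono.2
      intro z hz
      refine ⟨le_trans (Nat.cast_le.2 (by simp)) hz.1, hz.2⟩
  have hFne : (⨅ n : ℕ, Filter.principal (R n)).NeBot :=
    Filter.iInf_neBot_of_directed hRdir fun n => Filter.principal_neBot_iff.2 (hRne n)
  set 𝒰 : Ultrafilter Bsg := @Ultrafilter.of Bsg (⨅ n : ℕ, Filter.principal (R n)) hFne with h𝒰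
  have hRmem : ∀ n : ℕ, R n ∈ 𝒰 :=
    fun n => Ultrafilter.of_le _ (Filter.mem_iInf_of_mem n (Filter.mem_principal_self _))
  have h𝒰mn : ∀ M : ℝ, {z : Bsg | M < mn z} ∈ 𝒰 := by
    intro M
    refine Filter.mem_of_superset (hRmem (⌈max M 0⌉₊ + 1)) ?_
    intro z hz
    have h1 : M ≤ (⌈max M 0⌉₊ : ℝ) := le_trans (le_max_left M 0) (Nat.le_ceil _)
    have h2 : ((⌈max M 0⌉₊ + 1 : ℕ) : ℝ) ≤ mn z := hz.1
    simp only [Set.mem_setOf_eq]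
    push_cast at h2
    linarith
  have h𝒰co : ↑𝒰 ≤ Filter.cocompact Bsg := le_cocompact_of_mn h𝒰mn
  have h𝒰K₀ : ↑(𝒰.map f) ≤ Filter.principal K₀ := by
    refine Filter.le_principal_iff.2 ?_
    have h1 : R 0 ⊆ f ⁻¹' K₀ := fun z hz => hz.2
    have h2 : f ⁻¹' K₀ ∈ 𝒰 := Filter.mem_of_superset (hRmem 0) h1
    simpa [Ultrafilter.coe_map, Filter.mem_map] using h2
  obtain ⟨a, haK₀, hfa⟩ := hK₀c.ultrafilter_le_nhds (𝒰.map f) h𝒰K₀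
  have hfa' : Filter.Tendsto f ↑𝒰 (nhds a) := by
    rw [Filter.Tendsto, ← Ultrafilter.coe_map]; exact hfa
  have haI : a ∈ I := hE ↑𝒰 𝒰.neBot h𝒰co a hfa'
  -- frequent entry of the idempotent ray into any neighborhood of the ideal
  have hfreq : ∀ V₁ : Set S, IsOpen V₁ → I ⊆ V₁ → ∀ T : ℝ,
      ∃ t : ℝ, T ≤ t ∧ 0 ≤ t ∧ f (g 0 t) ∈ V₁ := by
    intro V₁ hV₁o hIV₁ T
    by_cases hcase : ∃ δ : ℝ, ∃ K : Set S, IsCompact K ∧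
        ∀ H : ℝ, ∃ u, H ≤ u ∧ 0 ≤ u ∧ f (g δ u) ∈ K
    · -- some ray frequently visits a compact set; transfer to the idempotent ray
      obtain ⟨δ, K, hKc, hK⟩ := hcase
      choose u hu1 hu2 hu3 using fun k : ℕ => hK (k : ℝ)
      set y : ℕ → Bsg := fun k => g δ (u k) with hy
      have hyco : ↑((Filter.hyperfilter ℕ).map y) ≤ Filter.cocompact Bsg := by
        refine hco_mn y fun k => ?_
        rw [hy]; rw [mn_g]
        exact le_trans (hu1 k) (le_max_left _ _)
      set V := (Filter.hyperfilter ℕ).map y with hV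
      have h2 : ↑(V.map f) ≤ Filter.principal K := by
        refine Filter.le_principal_iff.2 ?_
        have h3 : {k : ℕ | f (y k) ∈ K} ∈ Filter.hyperfilter ℕ := Filter.univ_mem' hu3
        exact h3
      obtain ⟨b, hbK, hb⟩ := hKc.ultrafilter_le_nhds (V.map f) h2
      have hbI : b ∈ I := by
        refine hE ↑V V.neBot hyco b ?_
        rw [Filter.Tendsto, ← Ultrafilter.coe_map]; exact hb
      set qL : Bsg := g (max (-δ) 0) 0 with hqL
      set qR : Bsg := g (-max δ 0) 0 with hqR
      set Φ : S → S := fun w => (f qL * w) * f qR with hΦ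
      have hΦc : Continuous Φ := ((hsep (f qR)).2).comp ((hsep (f qL)).1)
      have hΦI : Φ b ∈ I := (hIdeal (f qR) _ ((hIdeal (f qL) b hbI).1)).2
      have hnb : Φ ⁻¹' V₁ ∈ nhds b :=
        hΦc.continuousAt.preimage_mem_nhds (hV₁o.mem_nhds (hIV₁ hΦI))
      have hev1 : {k : ℕ | f (g 0 (u k)) ∈ V₁} ∈ Filter.hyperfilter ℕ := by
        have h4 : Φ ⁻¹' V₁ ∈ V.map f := (Filter.le_def.1 hb) _ hnb
        have h5 : {k : ℕ | Φ (f (y k)) ∈ V₁} ∈ Filter.hyperfilter ℕ := by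
          exact h4
        refine Filter.mem_of_superset h5 ?_
        intro k hk
        simp only [Set.mem_setOf_eq] at hk ⊢
        have h6 : Φ (f (y k)) = f (g 0 (u k)) := by
          rw [hΦ, hy]
          dsimp only
          rw [← hhom, ← hhom, hqL, hqR, sandwich_to_e δ (u k) (hu2 k)]
        rwa [h6] at hk
      have hev2 : {k : ℕ | T ≤ (k : ℝ)} ∈ Filter.hyperfilter ℕ := by
        refine Filter.hyperfilter_le_cofinite ?_
        apply Filter.eventually_cofinite.2
        have hsub : {k : ℕ | ¬ T ≤ (k : ℝ)} ⊆ Set.Iio (⌈max T 0⌉₊ + 1) := by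
          intro k hk
          simp only [Set.mem_setOf_eq, not_le] at hk
          simp only [Set.mem_Iio]
          have h7 : (k : ℝ) ≤ (⌈max T 0⌉₊ : ℝ) :=
            le_trans (le_of_lt (lt_of_lt_of_le hk (le_max_left T 0))) (Nat.le_ceil _)
          exact Nat.lt_succ_of_le (Nat.cast_le.1 h7)
        exact (Set.finite_Iio _).subset hsub
      obtain ⟨k, hk1, hk2⟩ := Filter.nonempty_of_mem (Filter.inter_mem hev2 hev1)
      exact ⟨u k, le_trans hk1 (hu1 k), hu2 k, hk2⟩
    · -- otherwise all ray tails escape every compact set : contradiction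
      exfalso
      push_neg at hcase
      have hprop : ∀ δ : ℝ, ∀ K : Set S, IsCompact K →
          ∃ H : ℝ, ∀ u, H ≤ u → 0 ≤ u → f (g δ u) ∉ K := by
        intro δ K hKc
        obtain ⟨H, hH⟩ := hcase δ K hKc
        exact ⟨H, fun u h1 h2 h3 => hH u h1 h2 h3⟩
      obtain ⟨K₁, hK₁c, hIK₁, hK₁V₁⟩ := exists_compact_between hIcomp hV₁o hIV₁
      obtain ⟨N, hNc, haN, hNK₁⟩ := exists_compact_subset isOpen_interior (hIK₁ haI)
      -- the ultrafilter 𝒰 cannot concentrate on a single ray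
      have hnc : ∀ δ : ℝ, {z : Bsg | D z = δ} ∉ 𝒰 := by
        intro δ hδ
        obtain ⟨H, hH⟩ := hprop δ N hNc
        have hm : ({z : Bsg | D z = δ} ∩ ({z : Bsg | max H 0 < mn z} ∩
            f ⁻¹' interior N)) ∈ 𝒰 :=
          Filter.inter_mem hδ (Filter.inter_mem (h𝒰mn (max H 0)) (hfa' (isOpen_interior.mem_nhds haN)))
        obtain ⟨z, hz1, hz2, hz3⟩ := Filter.nonempty_of_mem hm
        have h8 : f (g δ (mn z)) ∈ N := by
          rw [← hz1, g_mn_D z]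
          exact interior_subset hz3
        exact hH (mn z) (le_trans (le_max_left H 0) (le_of_lt hz2)) (mn_nonneg z) h8
      -- infinitely many rays enter the neighborhood N of a
      have hDinf : {δ : ℝ | ∃ z : Bsg, D z = δ ∧ f z ∈ interior N}.Infinite := by
        by_contra hfin
        rw [Set.not_infinite] at hfin
        have h9 : f ⁻¹' interior N ∈ 𝒰 := hfa' (isOpen_interior.mem_nhds haN)
        have h10 : ∃ δ ∈ {δ : ℝ | ∃ z : Bsg, D z = δ ∧ f z ∈ interior N},
            {z : Bsg | D z = δ} ∈ 𝒰 := by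
          by_contra hno
          push_neg at hno
          have h11 : (⋂ δ ∈ {δ : ℝ | ∃ z : Bsg, D z = δ ∧ f z ∈ interior N},
              {z : Bsg | D z = δ}ᶜ) ∈ 𝒰 :=
            (Filter.biInter_mem hfin).2 fun δ hδ => (Ultrafilter.compl_mem_iff_notMem).2 (hno δ hδ)
          obtain ⟨z, hz1, hz2⟩ := Filter.nonempty_of_mem (Filter.inter_mem h9 h11)
          have h12 : z ∈ {w : Bsg | D w = D z}ᶜ := by
            have := Set.mem_iInter₂.1 hz2 (D z) ⟨z, rfl, hz1⟩
            exact this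
          exact h12 rfl
        obtain ⟨δ, -, hδ⟩ := h10
        exact hnc δ hδ
      -- pick points on infinitely many distinct rays
      set ι := hDinf.natEmbedding with hι
      have hsel : ∀ k : ℕ, ∃ z : Bsg, D z = (ι k : ℝ) ∧ f z ∈ interior N := fun k => (ι k).2
      choose x hx1 hx2 using hsel
      -- last exit from K₁ along each of these rays
      have hA : ∀ k : ℕ, ∃ ξ : ℝ, (mn (x k) ≤ ξ ∧ f (g (ι k : ℝ) ξ) ∈ K₁) ∧
          ∀ u, mn (x k) ≤ u → f (g (ι k : ℝ) u) ∈ K₁ → u ≤ ξ := by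
        intro k
        set A : Set ℝ := Set.Ici (mn (x k)) ∩ (fun u => f (g (ι k : ℝ) u)) ⁻¹' K₁ with hAdef
        have hane : A.Nonempty := by
          refine ⟨mn (x k), Set.mem_Ici.2 (le_refl _), ?_⟩
          simp only [Set.mem_preimage]
          rw [← hx1 k, g_mn_D (x k)]
          exact (hNK₁.trans interior_subset) (interior_subset (hx2 k))
        obtain ⟨H, hH⟩ := hprop (ι k : ℝ) K₁ hK₁c
        have hasub : A ⊆ Set.Icc (mn (x k)) (max H (mn (x k))) := by
          rintro u ⟨h1, h2⟩
          refine ⟨h1, ?_⟩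
          by_contra hcon
          push_neg at hcon
          have h13 : H ≤ u := le_of_lt (lt_of_le_of_lt (le_max_left _ _) hcon)
          exact hH u h13 (le_trans (mn_nonneg (x k)) h1) h2
        have hacl : IsClosed A :=
          IsClosed.inter isClosed_Ici (hK₁c.isClosed.preimage (fcont.comp (continuous_g _)))
        have hacp : IsCompact A := IsCompact.of_isClosed_subset isCompact_Icc hacl hasub
        refine ⟨sSup A, hacp.sSup_mem hane, fun u h1 h2 => ?_⟩
        exact le_csSup hacp.bddAbove ⟨h1, h2⟩
      choose ξ hξ1 hξ2 using hA
      set y : ℕ → Bsg := fun k => g (ι k : ℝ) (ξ k) with hy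
      have hyK₁ : ∀ k, f (y k) ∈ K₁ := fun k => (hξ1 k).2
      have hynotint : ∀ k, f (y k) ∉ interior K₁ := by
        intro k hin
        have hc : Continuous fun u : ℝ => f (g (ι k : ℝ) u) := fcont.comp (continuous_g _)
        have hn : (fun u : ℝ => f (g (ι k : ℝ) u)) ⁻¹' interior K₁ ∈ nhds (ξ k) :=
          hc.continuousAt.preimage_mem_nhds (isOpen_interior.mem_nhds hin)
        obtain ⟨l, r, hlr, hIoo⟩ := mem_nhds_iff_exists_Ioo_subset.1 hn
        set u' := (ξ k + r) / 2 with hu'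
        have h14 : ξ k < u' := by
          simp only [hu']; have := hlr.2; linarith
        have h15 : u' < r := by
          simp only [hu']; have := hlr.2; linarith
        have h16 : u' ∈ Set.Ioo l r := ⟨lt_trans hlr.1 h14, h15⟩
        have h17 : f (g (ι k : ℝ) u') ∈ K₁ := interior_subset (hIoo h16)
        have h18 := hξ2 k u' (le_trans (hξ1 k).1 (le_of_lt h14)) h17
        linarith
      have hinjD : Function.Injective fun k : ℕ => D (y k) := by
        intro k m hkm
        simp only [hy, D_g] at hkm
        exact ι.injective (Subtype.coe_injective hkm)
      refine hcap y (hco_rays y hinjD) (K₁ \ interior K₁) (hK₁c.diff isOpen_interior)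
        (fun w hw hwI => hw.2 (hIK₁ hwI)) (fun k => ⟨hyK₁ k, hynotint k⟩)
  -- the idempotent ray is eventually inside every neighborhood of the ideal
  have htail0 : ∀ V : Set S, IsOpen V → I ⊆ V →
      ∃ T : ℝ, ∀ t, T ≤ t → 0 ≤ t → f (g 0 t) ∈ V := by
    intro V hVo hIV
    by_contra hcon
    push_neg at hcon
    choose t ht1 ht2 ht3 using fun j : ℕ => hcon (j : ℝ)
    obtain ⟨K₁, hK₁c, hIK₁, hK₁V⟩ := exists_compact_between hIcomp hVo hIV
    have hA : ∀ j : ℕ, ∃ τ : ℝ, (t j ≤ τ ∧ f (g 0 τ) ∈ K₁) ∧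
        ∀ u, t j ≤ u → f (g 0 u) ∈ K₁ → τ ≤ u := by
      intro j
      set A : Set ℝ := Set.Ici (t j) ∩ (fun u => f (g 0 u)) ⁻¹' K₁ with hAdef
      obtain ⟨s, hs1, hs2, hs3⟩ := hfreq (interior K₁) isOpen_interior hIK₁ (t j)
      have hane : A.Nonempty := ⟨s, Set.mem_Ici.2 hs1, Set.mem_preimage.2 (interior_subset hs3)⟩
      have hacl : IsClosed A :=
        IsClosed.inter isClosed_Ici (hK₁c.isClosed.preimage (fcont.comp (continuous_g _)))
      have habb : BddBelow A := ⟨t j, fun u hu => hu.1⟩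
      refine ⟨sInf A, hacl.csInf_mem hane habb, fun u h1 h2 => ?_⟩
      exact csInf_le habb ⟨h1, h2⟩
    choose τ hτ1 hτ2 using hA
    have hτt : ∀ j, t j < τ j := by
      intro j
      rcases lt_or_eq_of_le (hτ1 j).1 with h | h
      · exact h
      · exfalso
        have h1 : f (g 0 (t j)) ∈ K₁ := by rw [h]; exact (hτ1 j).2
        exact ht3 j (hK₁V h1)
    have hynotint : ∀ j, f (g 0 (τ j)) ∉ interior K₁ := by
      intro j hin
      have hc : Continuous fun u : ℝ => f (g 0 u) := fcont.comp (continuous_g _)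
      have hn : (fun u : ℝ => f (g 0 u)) ⁻¹' interior K₁ ∈ nhds (τ j) :=
        hc.continuousAt.preimage_mem_nhds (isOpen_interior.mem_nhds hin)
      obtain ⟨l, r, hlr, hIoo⟩ := mem_nhds_iff_exists_Ioo_subset.1 hn
      set u' := max ((l + τ j) / 2) (t j) with hu'
      have h14 : u' < τ j := by
        rw [hu']
        apply max_lt _ (hτt j)
        have := hlr.1; linarith
      have h15 : l < u' := by
        rw [hu']
        have := hlr.1
        apply lt_of_lt_of_le _ (le_max_left _ _)
        linarith
      have h17 : f (g 0 u') ∈ K₁ :=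
        interior_subset (hIoo ⟨h15, lt_trans h14 hlr.2⟩)
      have h18 := hτ2 j u' (le_max_right _ _) h17
      linarith
    set y : ℕ → Bsg := fun j => g 0 (τ j) with hy
    have hymn : ∀ j : ℕ, (j : ℝ) ≤ mn (y j) := by
      intro j
      rw [hy]; rw [mn_g]
      exact le_trans (le_trans (ht1 j) (le_of_lt (hτt j))) (le_max_left _ _)
    refine hcap y (hco_mn y hymn) (K₁ \ interior K₁) (hK₁c.diff isOpen_interior)
      (fun w hw hwI => hw.2 (hIK₁ hwI)) (fun j => ⟨(hτ1 j).2, hynotint j⟩)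
  -- each ray is eventually inside every neighborhood of the ideal
  have htail : ∀ V : Set S, IsOpen V → I ⊆ V → ∀ δ : ℝ,
      ∃ M : ℝ, 0 ≤ M ∧ ∀ u, M ≤ u → f (g δ u) ∈ V := by
    intro V hVo hIV δ
    set q : Bsg := g δ 0 with hq
    have hV'o : IsOpen ((fun w : S => f q * w) ⁻¹' V) := hVo.preimage (hsep (f q)).1
    have hIV' : I ⊆ (fun w : S => f q * w) ⁻¹' V := fun w hw =>
      hIV ((hIdeal (f q) w hw).1)
    obtain ⟨T, hT⟩ := htail0 _ hV'o hIV'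
    refine ⟨max T 0, le_max_right _ _, fun u hu => ?_⟩
    have h0u : 0 ≤ u := le_trans (le_max_right _ _) hu
    have h1 : f (g δ u) = f q * f (g 0 (u + max δ 0)) := by
      rw [← hhom, hq, ray_from_start δ u h0u]
    have h2 : T ≤ u + max δ 0 :=
      le_trans (le_trans (le_max_left _ _) hu) (by have := le_max_right δ 0; linarith)
    have h3 : (0:ℝ) ≤ u + max δ 0 := by have := le_max_right δ 0; linarith
    have h4 := hT (u + max δ 0) h2 h3
    rw [h1]
    exact h4
  -- only finitely many rays ever leave a neighborhood of the ideal
  have hbad : ∀ V : Set S, IsOpen V → I ⊆ V →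
      {δ : ℝ | ∃ u, 0 ≤ u ∧ f (g δ u) ∉ V}.Finite := by
    intro V hVo hIV
    by_contra hinf
    rw [← Set.not_infinite, not_not] at hinf
    obtain ⟨K₁, hK₁c, hIK₁, hK₁V⟩ := exists_compact_between hIcomp hVo hIV
    set ι := hinf.natEmbedding with hι
    have hsel : ∀ k : ℕ, ∃ u, 0 ≤ u ∧ f (g (ι k : ℝ) u) ∉ V := fun k => (ι k).2
    choose w hw1 hw2 using hsel
    have hA : ∀ k : ℕ, ∃ μ : ℝ, (w k ≤ μ ∧ f (g (ι k : ℝ) μ) ∈ K₁) ∧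
        ∀ u, w k ≤ u → f (g (ι k : ℝ) u) ∈ K₁ → μ ≤ u := by
      intro k
      set A : Set ℝ := Set.Ici (w k) ∩ (fun u => f (g (ι k : ℝ) u)) ⁻¹' K₁ with hAdef
      obtain ⟨M, hM0, hM⟩ := htail (interior K₁) isOpen_interior hIK₁ (ι k : ℝ)
      have hane : A.Nonempty :=
        ⟨max M (w k), Set.mem_Ici.2 (le_max_right _ _),
          Set.mem_preimage.2 (interior_subset (hM _ (le_max_left _ _)))⟩
      have hacl : IsClosed A :=
        IsClosed.inter isClosed_Ici (hK₁c.isClosed.preimage (fcont.comp (continuous_g _)))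
      have habb : BddBelow A := ⟨w k, fun u hu => hu.1⟩
      refine ⟨sInf A, hacl.csInf_mem hane habb, fun u h1 h2 => ?_⟩
      exact csInf_le habb ⟨h1, h2⟩
    choose μ hμ1 hμ2 using hA
    have hμw : ∀ k, w k < μ k := by
      intro k
      rcases lt_or_eq_of_le (hμ1 k).1 with h | h
      · exact h
      · exfalso
        have h1 : f (g (ι k : ℝ) (w k)) ∈ K₁ := by rw [h]; exact (hμ1 k).2
        exact hw2 k (hK₁V h1)
    have hynotint : ∀ k, f (g (ι k : ℝ) (μ k)) ∉ interior K₁ := by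
      intro k hin
      have hc : Continuous fun u : ℝ => f (g (ι k : ℝ) u) := fcont.comp (continuous_g _)
      have hn : (fun u : ℝ => f (g (ι k : ℝ) u)) ⁻¹' interior K₁ ∈ nhds (μ k) :=
        hc.continuousAt.preimage_mem_nhds (isOpen_interior.mem_nhds hin)
      obtain ⟨l, r, hlr, hIoo⟩ := mem_nhds_iff_exists_Ioo_subset.1 hn
      set u' := max ((l + μ k) / 2) (w k) with hu'
      have h14 : u' < μ k := by
        rw [hu']
        apply max_lt _ (hμw k)
        have := hlr.1; linarith
      have h15 : l < u' := by
        rw [hu']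
        have := hlr.1
        apply lt_of_lt_of_le _ (le_max_left _ _)
        linarith
      have h17 : f (g (ι k : ℝ) u') ∈ K₁ :=
        interior_subset (hIoo ⟨h15, lt_trans h14 hlr.2⟩)
      have h18 := hμ2 k u' (le_max_right _ _) h17
      linarith
    set y : ℕ → Bsg := fun k => g (ι k : ℝ) (μ k) with hy
    have hinjD : Function.Injective fun k : ℕ => D (y k) := by
      intro k m hkm
      simp only [hy, D_g] at hkm
      exact ι.injective (Subtype.coe_injective hkm)
    refine hcap y (hco_rays y hinjD) (K₁ \ interior K₁) (hK₁c.diff isOpen_interior)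
      (fun w' hw' hwI => hw'.2 (hIK₁ hwI)) (fun k => ⟨(hμ1 k).2, hynotint k⟩)
  -- the complement of any open neighborhood of the ideal is compact
  have hcompl : ∀ V : Set S, IsOpen V → I ⊆ V → IsCompact Vᶜ := by
    intro V hVo hIV
    have hfin := hbad V hVo hIV
    have hsel : ∀ δ : ℝ, ∃ M : ℝ, 0 ≤ M ∧ ∀ u, M ≤ u → f (g δ u) ∈ V := htail V hVo hIV
    choose M hM0 hM using hsel
    set C : Set Bsg := f ⁻¹' Vᶜ with hC
    have hCcl : IsClosed C := (isClosed_compl_iff.2 hVo).preimage fcont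
    set KB : Set Bsg := ⋃ δ ∈ {δ : ℝ | ∃ u, 0 ≤ u ∧ f (g δ u) ∉ V},
        g δ '' Set.Icc 0 (M δ) with hKB
    have hKBc : IsCompact KB := hfin.isCompact_biUnion fun δ _ => isCompact_seg δ (M δ)
    have hsub : C ⊆ KB := by
      intro z hz
      have hzV : f z ∉ V := hz
      have hδ : D z ∈ {δ : ℝ | ∃ u, 0 ≤ u ∧ f (g δ u) ∉ V} :=
        ⟨mn z, mn_nonneg z, by rw [g_mn_D z]; exact hzV⟩
      have hmn : mn z ≤ M (D z) := by
        by_contra hcon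
        push_neg at hcon
        exact hzV (by
          have := hM (D z) (mn z) (le_of_lt hcon)
          rwa [g_mn_D z] at this)
      refine Set.mem_biUnion hδ ⟨mn z, ⟨mn_nonneg z, hmn⟩, g_mn_D z⟩
    have hCc : IsCompact C := IsCompact.of_isClosed_subset hKBc hCcl hsub
    have himg : Vᶜ = f '' C := by
      apply Set.eq_of_subset_of_subset
      · intro b hb
        obtain ⟨p, rfl⟩ := hmem b fun hbI => hb (hIV hbI)
        exact ⟨p, hb, rfl⟩
      · rintro - ⟨p, hp, rfl⟩
        exact hp
    rw [himg]
    exact hCc.image fcont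
  -- assembly : S is the union of two compact sets
  refine ⟨?_⟩
  have h1 := hcompl (interior K₀) isOpen_interior hIK₀
  have h2 : (Set.univ : Set S) = K₀ ∪ (interior K₀)ᶜ := by
    apply Set.eq_of_subset_of_subset
    · intro x _
      by_cases hx : x ∈ interior K₀
      · exact Or.inl (interior_subset hx)
      · exact Or.inr hx
    · exact Set.subset_univ _
  rw [h2]
  exact hK₀c.union h1
end

section
/- For arbitrary elements (a,b) and (c,d) of B_{[0,∞)} the following statements are equivalent: (i) (a,b) ≼ (c,d) with respect to the natural partial order; (ii) a ≥ c and a + d = b + c; (iii) b ≥ d and a + d = b + c. -/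
open Bsg in
/-- description of the natural partial order on `B_{[0,∞)}`:
`(a,b) ≼ (c,d)` iff `a ≥ c` and `a + d = b + c`, iff `b ≥ d` and `a + d = b + c`. -/
theorem stmt10 (u v : Bsg) :
    (ple u v ↔ (v.1.1 ≤ u.1.1 ∧ u.1.1 + v.1.2 = u.1.2 + v.1.1)) ∧
    (ple u v ↔ (v.1.2 ≤ u.1.2 ∧ u.1.1 + v.1.2 = u.1.2 + v.1.1)) := by
  have key : ple u v ↔ (v.1.1 ≤ u.1.1 ∧ u.1.1 + v.1.2 = u.1.2 + v.1.1) := by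
    constructor
    · rintro ⟨e, he, hu⟩
      have he1 : e.1.1 + e.1.1 - min e.1.2 e.1.1 = e.1.1 := congrArg (fun p => p.1.1) he
      have he2 : e.1.2 + e.1.2 - min e.1.2 e.1.1 = e.1.2 := congrArg (fun p => p.1.2) he
      have hee : e.1.1 = e.1.2 := by
        rcases min_cases e.1.2 e.1.1 with ⟨h, _⟩ | ⟨h, _⟩ <;> rw [h] at he1 he2 <;> linarith
      have hu1 : u.1.1 = v.1.1 + e.1.1 - min v.1.2 e.1.1 := congrArg (fun p => p.1.1) hu
      have hu2 : u.1.2 = v.1.2 + e.1.2 - min v.1.2 e.1.1 := congrArg (fun p => p.1.2) hu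
      have hm1 := min_le_left v.1.2 e.1.1
      have hm2 := min_le_right v.1.2 e.1.1
      constructor <;> linarith
    · rintro ⟨h1, h2⟩
      refine ⟨⟨(u.1.2, u.1.2), u.2.2, u.2.2⟩, ?_, ?_⟩
      · apply Subtype.ext
        show (u.1.2 + u.1.2 - min u.1.2 u.1.2, u.1.2 + u.1.2 - min u.1.2 u.1.2) = _
        simp
      · apply Subtype.ext
        have hv2 : v.1.2 ≤ u.1.2 := by linarith
        show u.1 = (v.1.1 + u.1.2 - min v.1.2 u.1.2, v.1.2 + u.1.2 - min v.1.2 u.1.2)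
        rw [min_eq_left hv2, Prod.ext_iff]
        constructor <;> simp <;> linarith
  refine ⟨key, key.trans ?_⟩
  constructor <;> rintro ⟨h1, h2⟩ <;> exact ⟨by linarith, h2⟩
end

section
/- Let α and β be non-negative real numbers and let the product of two subsets A, B of B_{[0,∞)} be the set {u·v : u ∈ A, v ∈ B}. Then: (i) L_α^+ · L_β^+ = L_{α+β}^+; (ii) L_α^− · L_β^− = L_{α+β}^−; (iii) L_α^+ · L_β^− = L_{α−β}^+ if α ≥ β and L_α^+ · L_β^− = L_{β−α}^− if α ≤ β; (iv) L_β^− · L_α^+ = ↓(β,α), and this set is contained in L_{α−β}^+ if α ≥ β and in L_{β−α}^− if α ≤ β. -/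
namespace Bsg

lemma mul_fst' (u v : Bsg) : (u * v).1.1 = u.1.1 + v.1.1 - min u.1.2 v.1.1 := rfl
lemma mul_snd' (u v : Bsg) : (u * v).1.2 = u.1.2 + v.1.2 - min u.1.2 v.1.1 := rfl

end Bsg

open Bsg in
/-- products of the rays `L_α^+`, `L_β^−` in `B_{[0,∞)}`. -/
theorem stmt11 (α β : ℝ) (hα : 0 ≤ α) (hβ : 0 ≤ β) :
    Set.image2 (· * ·) (Lplus α) (Lplus β) = Lplus (α + β) ∧
    Set.image2 (· * ·) (Lminus α) (Lminus β) = Lminus (α + β) ∧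
    (β ≤ α → Set.image2 (· * ·) (Lplus α) (Lminus β) = Lplus (α - β)) ∧
    (α ≤ β → Set.image2 (· * ·) (Lplus α) (Lminus β) = Lminus (β - α)) ∧
    Set.image2 (· * ·) (Lminus β) (Lplus α) = lowerSet ⟨(β, α), hβ, hα⟩ ∧
    (β ≤ α → Set.image2 (· * ·) (Lminus β) (Lplus α) ⊆ Lplus (α - β)) ∧
    (α ≤ β → Set.image2 (· * ·) (Lminus β) (Lplus α) ⊆ Lminus (β - α)) := by
  refine ⟨?_, ?_, ?_, ?_, ?_, ?_, ?_⟩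
  · -- (i)
    ext s
    simp only [Set.mem_image2, Lplus, Set.mem_setOf_eq]
    constructor
    · rintro ⟨u, hu, v, hv, rfl⟩
      rw [mul_fst', mul_snd']; linarith
    · intro hs
      refine ⟨⟨(s.1.1, s.1.1 + α), s.2.1, by show (0:ℝ) ≤ s.1.1 + α; linarith [s.2.1]⟩, rfl,
        ⟨(0, β), le_rfl, hβ⟩, (zero_add β).symm, ?_⟩
      have h0 : min (s.1.1 + α) (0:ℝ) = 0 := min_eq_right (by linarith [s.2.1])
      apply Subtype.ext; rw [Prod.ext_iff]
      constructor
      · show s.1.1 + 0 - min (s.1.1 + α) 0 = s.1.1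
        rw [h0]; ring
      · show (s.1.1 + α) + β - min (s.1.1 + α) 0 = s.1.2
        rw [h0, hs]; ring
  · -- (ii)
    ext s
    simp only [Set.mem_image2, Lminus, Set.mem_setOf_eq]
    constructor
    · rintro ⟨u, hu, v, hv, rfl⟩
      rw [mul_fst', mul_snd']; linarith
    · intro hs
      refine ⟨⟨(α, 0), hα, le_rfl⟩, (zero_add α).symm,
        ⟨(s.1.2 + β, s.1.2), by show (0:ℝ) ≤ s.1.2 + β; linarith [s.2.2], s.2.2⟩, rfl, ?_⟩
      have h0 : min (0:ℝ) (s.1.2 + β) = 0 := min_eq_left (by linarith [s.2.2])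
      apply Subtype.ext; rw [Prod.ext_iff]
      constructor
      · show α + (s.1.2 + β) - min (0:ℝ) (s.1.2 + β) = s.1.1
        rw [h0, hs]; ring
      · show 0 + s.1.2 - min (0:ℝ) (s.1.2 + β) = s.1.2
        rw [h0]; ring
  · -- (iii)
    intro hba
    ext s
    simp only [Set.mem_image2, Lplus, Lminus, Set.mem_setOf_eq]
    constructor
    · rintro ⟨u, hu, v, hv, rfl⟩
      rw [mul_fst', mul_snd']; linarith
    · intro hs
      refine ⟨⟨(s.1.1, s.1.1 + α), s.2.1, by show (0:ℝ) ≤ s.1.1 + α; linarith [s.2.1]⟩, rfl,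
        ⟨(β, 0), hβ, le_rfl⟩, (zero_add β).symm, ?_⟩
      have h0 : min (s.1.1 + α) β = β := min_eq_right (by linarith [s.2.1])
      apply Subtype.ext; rw [Prod.ext_iff]
      constructor
      · show s.1.1 + β - min (s.1.1 + α) β = s.1.1
        rw [h0]; ring
      · show (s.1.1 + α) + 0 - min (s.1.1 + α) β = s.1.2
        rw [h0, hs]; ring
  · -- (iv)
    intro hab
    ext s
    simp only [Set.mem_image2, Lplus, Lminus, Set.mem_setOf_eq]
    constructor
    · rintro ⟨u, hu, v, hv, rfl⟩
      rw [mul_fst', mul_snd']; linarith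
    · intro hs
      refine ⟨⟨(0, α), le_rfl, hα⟩, (zero_add α).symm,
        ⟨(s.1.2 + β, s.1.2), by show (0:ℝ) ≤ s.1.2 + β; linarith [s.2.2], s.2.2⟩, rfl, ?_⟩
      have h0 : min α (s.1.2 + β) = α := min_eq_left (by linarith [s.2.2])
      apply Subtype.ext; rw [Prod.ext_iff]
      constructor
      · show 0 + (s.1.2 + β) - min α (s.1.2 + β) = s.1.1
        rw [h0, hs]; ring
      · show α + s.1.2 - min α (s.1.2 + β) = s.1.2
        rw [h0]; ring
  · -- (v)
    ext s
    simp only [Set.mem_image2, Lplus, Lminus, Set.mem_setOf_eq, lowerSet, ple]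
    constructor
    · rintro ⟨u, hu, v, hv, rfl⟩
      have hm1 := min_le_left u.1.2 v.1.1
      have hm2 := min_le_right u.1.2 v.1.1
      have hq : α ≤ (u * v).1.2 := by
        rw [mul_snd']; have := u.2.2; have := v.2.1; linarith
      refine ⟨⟨((u*v).1.2, (u*v).1.2), (u*v).2.2, (u*v).2.2⟩, ?_, ?_⟩
      · apply Subtype.ext; rw [Prod.ext_iff]
        constructor
        · show (u*v).1.2 + (u*v).1.2 - min (u*v).1.2 (u*v).1.2 = (u*v).1.2
          rw [min_self]; ring
        · show (u*v).1.2 + (u*v).1.2 - min (u*v).1.2 (u*v).1.2 = (u*v).1.2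
          rw [min_self]; ring
      · have h0 : min α (u*v).1.2 = α := min_eq_left hq
        apply Subtype.ext; rw [Prod.ext_iff]
        constructor
        · show (u*v).1.1 = β + (u*v).1.2 - min α (u*v).1.2
          rw [h0, mul_fst', mul_snd']; linarith
        · show (u*v).1.2 = α + (u*v).1.2 - min α (u*v).1.2
          rw [h0]; ring
    · rintro ⟨e, he, hse⟩
      have h1 : (e * e).1.1 = e.1.1 := by rw [he]
      have h2 : (e * e).1.2 = e.1.2 := by rw [he]
      rw [mul_fst'] at h1
      rw [mul_snd'] at h2
      have hm1 := min_le_left e.1.2 e.1.1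
      have hm2 := min_le_right e.1.2 e.1.1
      have hcd : e.1.1 = e.1.2 := by linarith
      have hs1 : s.1.1 = β + e.1.1 - min α e.1.1 := by
        rw [hse, mul_fst']
      have hs2 : s.1.2 = α + e.1.2 - min α e.1.1 := by
        rw [hse, mul_snd']
      have ht0 : 0 ≤ e.1.1 - min α e.1.1 := by
        linarith [min_le_right α e.1.1]
      refine ⟨⟨(e.1.1 - min α e.1.1 + β, e.1.1 - min α e.1.1), by show (0:ℝ) ≤ e.1.1 - min α e.1.1 + β; linarith, ht0⟩, rfl,
        ⟨(e.1.1 - min α e.1.1, e.1.1 - min α e.1.1 + α), ht0, by show (0:ℝ) ≤ e.1.1 - min α e.1.1 + α; linarith⟩, rfl, ?_⟩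
      set t0 := e.1.1 - min α e.1.1 with ht0def
      apply Subtype.ext; rw [Prod.ext_iff]
      constructor
      · show (t0 + β) + t0 - min t0 t0 = s.1.1
        rw [min_self]; linarith
      · show t0 + (t0 + α) - min t0 t0 = s.1.2
        rw [min_self]; linarith
  · -- (vi)
    intro hba
    rintro s ⟨u, hu, v, hv, rfl⟩
    simp only [Lplus, Lminus, Set.mem_setOf_eq] at *
    rw [mul_fst', mul_snd']; linarith
  · -- (vii)
    intro hab
    rintro s ⟨u, hu, v, hv, rfl⟩
    simp only [Lplus, Lminus, Set.mem_setOf_eq] at *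
    rw [mul_fst', mul_snd']; linarith
end
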